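/- arXiv:1103.3755 — 3 statements merged into one kernel-verified Lean document; each statement's English description precedes it below -/
import Mathlib

section
/- The family of Coxeter transformations (θ_n)_{n≥0} is the unique family of additive maps φ_n : ℤY_n → ℤY_n such that, writing φ for their direct sum on ℤY: φ(S_|) = −S_|, φ(S_•) = −S_•, φ(a / b) = −φ(a) * φ(b) for all a, b ∈ ℤY, and φ(S_• * (a / (S_• * b))) = φ(S_• * a) / φ(S_• * b) − φ(S_• * a) * φ(S_• * b) for all a, b ∈ ℤY. In particular these conditions force φ_n(P_x) = −I_x for every n and every x ∈ Y_n. -/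
/-- A planar binary tree: either the trivial tree (a leaf) or an ordered pair of
planar binary trees. -/
inductive PBT : Type
  | leaf : PBT
  | node : PBT → PBT → PBT
  deriving DecidableEq

namespace PBT

/-- Number of internal vertices of a planar binary tree. -/
def size : PBT → ℕ
  | leaf => 0
  | node a b => a.size + b.size + 1

/-- One covering move of the Tamari order: `Rot x y` holds when `y` is obtained
from `x` by replacing some subtree of the form `((a,b),c)` by `(a,(b,c))`. -/
inductive Rot : PBT → PBT → Prop
  | rot (a b c : PBT) : Rot (node (node a b) c) (node a (node b c))
  | left {a a' : PBT} (b : PBT) : Rot a a' → Rot (node a b) (node a' b)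
  | right (a : PBT) {b b' : PBT} : Rot b b' → Rot (node a b) (node a b')

/-- The Tamari order: reflexive-transitive closure of `Rot`. -/
def tle (x y : PBT) : Prop := Relation.ReflTransGen Rot x y

/-- Grafting of `x` on the leftmost leaf of `y` : the operation `x / y`. -/
def overT : PBT → PBT → PBT
  | x, leaf => x
  | x, node y₁ y₂ => node (overT x y₁) y₂

/-- Grafting of `y` on the rightmost leaf of `x` : the operation `x ∖ y`. -/
def under : PBT → PBT → PBT
  | leaf, y => y
  | node x₁ x₂, y => node x₁ (under x₂ y)

theorem Rot.size_eq {x y : PBT} (h : Rot x y) : x.size = y.size := by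
  induction h <;> simp [size] <;> omega

theorem tle.size_eq {x y : PBT} (h : tle x y) : x.size = y.size := by
  induction h with
  | refl => rfl
  | tail _ h ih => rw [ih, h.size_eq]

theorem finite_size_le (n : ℕ) : {z : PBT | z.size ≤ n}.Finite := by
  induction n with
  | zero =>
    apply Set.Finite.subset (Set.finite_singleton leaf)
    rintro (_ | ⟨a, b⟩) hz
    · simp
    · simp [size] at hz
  | succ n ih =>
    apply Set.Finite.subset ((Set.Finite.image2 node ih ih).insert leaf)
    rintro (_ | ⟨a, b⟩) hz
    · simp
    · simp only [Set.mem_setOf_eq, size] at hz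
      exact Set.mem_insert_iff.mpr
        (Or.inr (Set.mem_image2.mpr ⟨a, by simp only [Set.mem_setOf_eq]; omega, b, by simp only [Set.mem_setOf_eq]; omega, rfl⟩))

theorem finite_size (n : ℕ) : {z : PBT | z.size = n}.Finite :=
  (finite_size_le n).subset fun _ hz => le_of_eq hz

theorem finite_tle_right (x : PBT) : {y : PBT | tle y x}.Finite :=
  (finite_size x.size).subset fun _ hy => hy.size_eq

theorem finite_tle_left (x : PBT) : {y : PBT | tle x y}.Finite :=
  (finite_size x.size).subset fun _ hy => hy.size_eq.symm

theorem finite_interval (x y : PBT) :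
    {z : PBT | tle (overT x y) z ∧ tle z (under x y)}.Finite :=
  (finite_tle_right (under x y)).subset fun _ hz => hz.2

end PBT

/-- The free abelian group `ℤY = ⊕ₙ ℤYₙ` on the set of all planar binary trees. -/
abbrev ZY : Type := PBT →₀ ℤ

namespace PBT

/-- The basis element `S_x` of `ℤY`. -/
noncomputable def S (x : PBT) : ZY := Finsupp.single x 1

/-- The class `P_x = ∑_{y ≤ x} S_y` of the projective module. -/
noncomputable def P (x : PBT) : ZY := ∑ y ∈ (finite_tle_right x).toFinset, S y

/-- The class `I_x = ∑_{y ≥ x} S_y` of the injective module. -/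
noncomputable def I (x : PBT) : ZY := ∑ y ∈ (finite_tle_left x).toFinset, S y

/-- The Loday-Ronco product on basis elements:
`S_x * S_y = ∑_{x/y ≤ z ≤ x∖y} S_z`. -/
noncomputable def starB (x y : PBT) : ZY := ∑ z ∈ (finite_interval x y).toFinset, S z

/-- Bilinear extension of a product defined on basis elements. -/
noncomputable def bilin (f : PBT → PBT → ZY) (a b : ZY) : ZY :=
  a.sum fun x ax => b.sum fun y byy => (ax * byy) • f x y

/-- The product `/` on `ℤY`, with `S_x / S_y = S_{x/y}`. -/
noncomputable def overM : ZY → ZY → ZY := bilin fun x y => S (x.overT y)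

/-- The product `∖` on `ℤY`, with `S_x ∖ S_y = S_{x∖y}`. -/
noncomputable def underM : ZY → ZY → ZY := bilin fun x y => S (x.under y)

/-- The Loday-Ronco product `*` on `ℤY`. -/
noncomputable def starM : ZY → ZY → ZY := bilin starB

/-- The unique planar binary tree `•` with one internal vertex. -/
def dot : PBT := node leaf leaf

end PBT

namespace PBT

theorem size_over (x y : PBT) : (overT x y).size = x.size + y.size := by
  induction y with
  | leaf => simp [overT, size]
  | node y₁ y₂ ih₁ ih₂ => simp only [overT, size, ih₁]; omega

theorem size_under (x y : PBT) : (under x y).size = x.size + y.size := by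
  induction x with
  | leaf => simp [under, size]
  | node x₁ x₂ ih₁ ih₂ => simp only [under, size, ih₂]; omega

theorem size_eq_zero {x : PBT} (h : x.size = 0) : x = leaf := by
  cases x with
  | leaf => rfl
  | node a b => simp [size] at h

theorem size_eq_one {x : PBT} (h : x.size = 1) : x = dot := by
  cases x with
  | leaf => simp [size] at h
  | node a b =>
    simp only [size] at h
    have ha : a.size = 0 := by omega
    have hb : b.size = 0 := by omega
    rw [dot, size_eq_zero ha, size_eq_zero hb]

/-- A statistic strictly increasing along rotations. -/
def fstat : PBT → ℕ
  | leaf => 0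
  | node a b => fstat a + fstat b + size b

theorem Rot.fstat_lt {x y : PBT} (h : Rot x y) : fstat x < fstat y := by
  induction h with
  | rot a b c => simp [fstat, size]; omega
  | left b h ih => simp only [fstat]; omega
  | right a h ih => simp only [fstat, h.size_eq]; omega

theorem tle.fstat_le {x y : PBT} (h : tle x y) : fstat x ≤ fstat y := by
  induction h with
  | refl => exact le_rfl
  | tail _ h ih => exact ih.trans h.fstat_lt.le

theorem tle.fstat_lt {x y : PBT} (h : tle x y) (hne : x ≠ y) : fstat x < fstat y := by
  cases h with
  | refl => exact absurd rfl hne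
  | tail h₁ h₂ => exact lt_of_le_of_lt (tle.fstat_le h₁) h₂.fstat_lt

theorem tle_antisymm {x y : PBT} (h1 : tle x y) (h2 : tle y x) : x = y := by
  by_contra hne
  exact absurd (h1.fstat_lt hne) (not_lt.2 h2.fstat_le)

theorem tle_refl (x : PBT) : tle x x := Relation.ReflTransGen.refl

theorem tle_trans {x y z : PBT} (h1 : tle x y) (h2 : tle y z) : tle x z := h1.trans h2

theorem Rot.tle {x y : PBT} (h : Rot x y) : tle x y := Relation.ReflTransGen.single h

theorem tle_node_left {a a' : PBT} (b : PBT) (h : tle a a') :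
    tle (node a b) (node a' b) := by
  induction h with
  | refl => exact tle_refl _
  | tail _ h ih => exact ih.tail (Rot.left b h)

theorem tle_node_right (a : PBT) {b b' : PBT} (h : tle b b') :
    tle (node a b) (node a b') := by
  induction h with
  | refl => exact tle_refl _
  | tail _ h ih => exact ih.tail (Rot.right a h)

theorem tle_node {a a' b b' : PBT} (ha : tle a a') (hb : tle b b') :
    tle (node a b) (node a' b') :=
  (tle_node_left b ha).trans (tle_node_right a' hb)

theorem Rot.over_left {u u' : PBT} (v : PBT) (h : Rot u u') :
    Rot (overT u v) (overT u' v) := by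
  induction v with
  | leaf => exact h
  | node v₁ v₂ ih₁ ih₂ => exact Rot.left v₂ ih₁

theorem Rot.over_right (u : PBT) {v v' : PBT} (h : Rot v v') :
    Rot (overT u v) (overT u v') := by
  induction h with
  | rot a b c => exact Rot.rot (overT u a) b c
  | left b h ih => exact Rot.left b ih
  | right a h ih => exact Rot.right (overT u a) h

theorem tle_over {u u' v v' : PBT} (hu : tle u u') (hv : tle v v') :
    tle (overT u v) (overT u' v') := by
  have h1 : tle (overT u v) (overT u' v) := by
    induction hu with
    | refl => exact tle_refl _
    | tail _ h ih => exact ih.tail (h.over_left v)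
  have h2 : tle (overT u' v) (overT u' v') := by
    induction hv with
    | refl => exact tle_refl _
    | tail _ h ih => exact ih.tail (Rot.over_right u' h)
  exact h1.trans h2

theorem Rot.under_left {u u' : PBT} (v : PBT) (h : Rot u u') :
    Rot (under u v) (under u' v) := by
  induction h with
  | rot a b c =>
    show Rot (node (node a b) (under c v)) (node a (node b (under c v)))
    exact Rot.rot a b (under c v)
  | left b h ih => exact Rot.left (under b v) h
  | right a h ih => exact Rot.right a ih

theorem Rot.under_right (u : PBT) {v v' : PBT} (h : Rot v v') :
    Rot (under u v) (under u v') := by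
  induction u with
  | leaf => exact h
  | node u₁ u₂ ih₁ ih₂ => exact Rot.right u₁ ih₂

theorem tle_under {u u' v v' : PBT} (hu : tle u u') (hv : tle v v') :
    tle (under u v) (under u' v') := by
  have h1 : tle (under u v) (under u' v) := by
    induction hu with
    | refl => exact tle_refl _
    | tail _ h ih => exact ih.tail (h.under_left v)
  have h2 : tle (under u' v) (under u' v') := by
    induction hv with
    | refl => exact tle_refl _
    | tail _ h ih => exact ih.tail (Rot.under_right u' h)
  exact h1.trans h2

end PBT
namespace PBT

theorem Rot.not_leaf_left {z : PBT} (h : Rot leaf z) : False := by cases h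

theorem Rot_node_inv {z p q : PBT} (h : Rot z (node p q)) :
    (∃ b c, q = node b c ∧ z = node (node p b) c) ∨
    (∃ p', Rot p' p ∧ z = node p' q) ∨ (∃ q', Rot q' q ∧ z = node p q') := by
  cases h with
  | rot a b c => exact Or.inl ⟨b, c, rfl, rfl⟩
  | left b h => exact Or.inr (Or.inl ⟨_, h, rfl⟩)
  | right a h => exact Or.inr (Or.inr ⟨_, h, rfl⟩)

theorem Rot_node_leaf {x z : PBT} (h : Rot (node leaf x) z) :
    ∃ x', Rot x x' ∧ z = node leaf x' := by
  cases h with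
  | left b h => exact absurd h Rot.not_leaf_left
  | right a h => exact ⟨_, h, rfl⟩

theorem tle_node_leaf {x z : PBT} (h : tle (node leaf x) z) :
    ∃ x', tle x x' ∧ z = node leaf x' := by
  induction h with
  | refl => exact ⟨x, tle_refl x, rfl⟩
  | tail _ h ih =>
    obtain ⟨x', hx', rfl⟩ := ih
    obtain ⟨x'', h'', rfl⟩ := Rot_node_leaf h
    exact ⟨x'', hx'.tail h'', rfl⟩

/-- Downward one-step decomposition for `over`. -/
theorem Rot_over_inv {z x y : PBT} (h : Rot z (overT x y)) :
    ∃ u v, z = overT u v ∧ ((Rot u x ∧ v = y) ∨ (u = x ∧ Rot v y)) := by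
  induction y generalizing z with
  | leaf => exact ⟨z, leaf, rfl, Or.inl ⟨h, rfl⟩⟩
  | node y₁ y₂ ih₁ ih₂ =>
    have h' : Rot z (node (overT x y₁) y₂) := h
    rcases Rot_node_inv h' with ⟨b, c, rfl, rfl⟩ | ⟨p', hp, rfl⟩ | ⟨q', hq, rfl⟩
    · exact ⟨x, node (node y₁ b) c, rfl, Or.inr ⟨rfl, Rot.rot y₁ b c⟩⟩
    · obtain ⟨u, v, rfl, hcase⟩ := ih₁ hp
      rcases hcase with ⟨hu, rfl⟩ | ⟨rfl, hv⟩
      · exact ⟨u, node v y₂, rfl, Or.inl ⟨hu, rfl⟩⟩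
      · exact ⟨u, node v y₂, rfl, Or.inr ⟨rfl, Rot.left y₂ hv⟩⟩
    · exact ⟨x, node y₁ q', rfl, Or.inr ⟨rfl, Rot.right y₁ hq⟩⟩

theorem tle_over_inv {z x y : PBT} (h : tle z (overT x y)) :
    ∃ u v, z = overT u v ∧ tle u x ∧ tle v y := by
  induction h using Relation.ReflTransGen.head_induction_on with
  | refl => exact ⟨x, y, rfl, tle_refl x, tle_refl y⟩
  | head hr _ ih =>
    obtain ⟨u, v, rfl, hu, hv⟩ := ih
    obtain ⟨u', v', rfl, hcase⟩ := Rot_over_inv hr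
    rcases hcase with ⟨h1, rfl⟩ | ⟨rfl, h2⟩
    · exact ⟨u', v', rfl, (Relation.ReflTransGen.single h1).trans hu, hv⟩
    · exact ⟨u', v', rfl, hu, (Relation.ReflTransGen.single h2).trans hv⟩

theorem over_injective {u v u' v' : PBT} (hs : u.size = u'.size)
    (h : overT u v = overT u' v') : u = u' ∧ v = v' := by
  induction v generalizing v' with
  | leaf =>
    cases v' with
    | leaf => exact ⟨h, rfl⟩
    | node a b =>
      exfalso
      have h2 := congrArg size h
      rw [size_over, size_over] at h2
      simp only [size] at h2 hs ⊢
      omega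
  | node v₁ v₂ ih₁ ih₂ =>
    cases v' with
    | leaf =>
      exfalso
      have h2 := congrArg size h
      rw [size_over, size_over] at h2
      simp only [size] at h2 hs ⊢
      omega
    | node a b =>
      simp only [overT, node.injEq] at h
      obtain ⟨h1, rfl⟩ := h
      obtain ⟨rfl, rfl⟩ := ih₁ h1
      exact ⟨rfl, rfl⟩

end PBT
namespace PBT

/-- Canonical splitting of a tree at position `m`. -/
def split : PBT → ℕ → PBT × PBT
  | leaf, _ => (leaf, leaf)
  | node a b, m =>
    if m ≤ a.size then
      ((split a m).1, node (split a m).2 b)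
    else
      (node a (split b (m - a.size - 1)).1, (split b (m - a.size - 1)).2)

theorem split_size {z : PBT} : ∀ {m : ℕ}, m ≤ z.size →
    (split z m).1.size = m ∧ (split z m).2.size = z.size - m := by
  induction z with
  | leaf =>
    intro m hm
    have : m = 0 := by simpa [size] using hm
    subst this; simp [split, size]
  | node a b iha ihb =>
    intro m hm
    simp only [size] at hm
    by_cases h : m ≤ a.size
    · obtain ⟨h1, h2⟩ := iha h
      simp [split, if_pos h, size, h1, h2]
      omega
    · have hm' : m - a.size - 1 ≤ b.size := by omega
      obtain ⟨h1, h2⟩ := ihb hm'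
      simp [split, if_neg h, size, h1, h2]
      omega

theorem split_zero (z : PBT) : split z 0 = (leaf, z) := by
  induction z with
  | leaf => rfl
  | node a b iha ihb => simp [split, iha]

theorem split_full (z : PBT) : split z z.size = (z, leaf) := by
  induction z with
  | leaf => rfl
  | node a b iha ihb =>
    have h : ¬ (node a b).size ≤ a.size := by simp only [size]; omega
    simp only [split, if_neg h]
    have h2 : (node a b).size - a.size - 1 = b.size := by simp only [size]; omega
    rw [h2, ihb]

theorem split_over (x y : PBT) : split (overT x y) x.size = (x, y) := by
  induction y with
  | leaf => exact split_full x
  | node y₁ y₂ ih =>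
    have h : x.size ≤ (overT x y₁).size := by rw [size_over]; omega
    show split (node (overT x y₁) y₂) x.size = (x, node y₁ y₂)
    simp only [split, if_pos h, ih]

theorem split_under (x y : PBT) : split (under x y) x.size = (x, y) := by
  induction x with
  | leaf => exact split_zero y
  | node x₁ x₂ ih₁ ih₂ =>
    show split (node x₁ (under x₂ y)) (node x₁ x₂).size = (node x₁ x₂, y)
    have h : ¬ (node x₁ x₂).size ≤ x₁.size := by simp only [size]; omega
    simp only [split, if_neg h]
    have he : (node x₁ x₂).size - x₁.size - 1 = x₂.size := by simp only [size]; omega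
    rw [he, ih₂]

theorem tle_node_under {u w b : PBT} : tle (node (under u w) b) (under u (node w b)) := by
  induction u with
  | leaf => exact tle_refl _
  | node u₁ u₂ ih₁ ih₂ =>
    show tle (node (node u₁ (under u₂ w)) b) (node u₁ (under u₂ (node w b)))
    exact (Rot.tle (Rot.rot u₁ (under u₂ w) b)).trans (tle_node_right u₁ ih₂)

theorem over_node_tle {a u v : PBT} : tle (overT (node a u) v) (node a (overT u v)) := by
  induction v with
  | leaf => exact tle_refl _
  | node v₁ v₂ ih₁ ih₂ =>
    show tle (node (overT (node a u) v₁) v₂) (node a (node (overT u v₁) v₂))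
    exact (tle_node_left v₂ ih₁).trans (Rot.tle (Rot.rot a (overT u v₁) v₂))

/-- Existence: `z` lies in the interval of its own splitting. -/
theorem split_mem {z : PBT} : ∀ {m : ℕ}, m ≤ z.size →
    tle (overT (split z m).1 (split z m).2) z ∧ tle z (under (split z m).1 (split z m).2) := by
  induction z with
  | leaf =>
    intro m hm
    have : m = 0 := by simpa [size] using hm
    subst this
    exact ⟨tle_refl _, tle_refl _⟩
  | node a b iha ihb =>
    intro m hm
    simp only [size] at hm
    by_cases h : m ≤ a.size
    · obtain ⟨h1, h2⟩ := iha h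
      simp only [split, if_pos h]
      constructor
      · show tle (node (overT (split a m).1 (split a m).2) b) (node a b)
        exact tle_node_left b h1
      · exact (tle_node_left b h2).trans tle_node_under
    · have hm' : m - a.size - 1 ≤ b.size := by omega
      obtain ⟨h1, h2⟩ := ihb hm'
      simp only [split, if_neg h]
      constructor
      · exact over_node_tle.trans (tle_node_right a h1)
      · show tle (node a b) (node a (under (split b (m - a.size - 1)).1 (split b (m - a.size - 1)).2))
        exact tle_node_right a h2

end PBT
namespace PBT

theorem split_node (a b : PBT) (m : ℕ) :
    split (node a b) m = if m ≤ a.size then ((split a m).1, node (split a m).2 b)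
      else (node a (split b (m - a.size - 1)).1, (split b (m - a.size - 1)).2) := rfl

theorem rot_split_mono {z z' : PBT} (h : Rot z z') (m : ℕ) :
    tle (split z m).1 (split z' m).1 ∧ tle (split z m).2 (split z' m).2 := by
  induction h generalizing m with
  | rot a b c =>
    by_cases h1 : m ≤ a.size
    · have h2 : m ≤ (node a b).size := by simp only [size]; omega
      rw [split_node (node a b) c, if_pos h2, split_node a b, if_pos h1,
        split_node a (node b c), if_pos h1]
      exact ⟨tle_refl _, Rot.tle (Rot.rot _ _ _)⟩
    · by_cases h2 : m ≤ (node a b).size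
      · have h3 : m - a.size - 1 ≤ b.size := by simp only [size] at h2; omega
        rw [split_node (node a b) c, if_pos h2, split_node a b, if_neg h1,
          split_node a (node b c), if_neg h1, split_node b c, if_pos h3]
        exact ⟨tle_refl _, tle_refl _⟩
      · have h3 : ¬ m - a.size - 1 ≤ b.size := by simp only [size] at h2; omega
        rw [split_node (node a b) c, if_neg h2, split_node a (node b c), if_neg h1,
          split_node b c, if_neg h3]
        have he : m - (node a b).size - 1 = m - a.size - 1 - b.size - 1 := by
          simp only [size]; omega
        rw [he]
        exact ⟨Rot.tle (Rot.rot _ _ _), tle_refl _⟩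
  | left b hr ih =>
    rename_i a a'
    have hs : a.size = a'.size := hr.size_eq
    by_cases h1 : m ≤ a.size
    · rw [split_node a b, if_pos h1, split_node a' b, if_pos (hs ▸ h1)]
      exact ⟨(ih m).1, tle_node_left b (ih m).2⟩
    · rw [split_node a b, if_neg h1, split_node a' b, if_neg (hs ▸ h1), ← hs]
      exact ⟨tle_node_left _ (Rot.tle hr), tle_refl _⟩
  | right a hr ih =>
    rename_i b b'
    by_cases h1 : m ≤ a.size
    · rw [split_node a b, if_pos h1, split_node a b', if_pos h1]
      exact ⟨tle_refl _, tle_node_right _ (Rot.tle hr)⟩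
    · rw [split_node a b, if_neg h1, split_node a b', if_neg h1]
      exact ⟨tle_node_right a (ih _).1, (ih _).2⟩

theorem tle_split_mono {z z' : PBT} (h : tle z z') (m : ℕ) :
    tle (split z m).1 (split z' m).1 ∧ tle (split z m).2 (split z' m).2 := by
  induction h with
  | refl => exact ⟨tle_refl _, tle_refl _⟩
  | tail _ hr ih =>
    exact ⟨(ih).1.trans (rot_split_mono hr m).1, (ih).2.trans (rot_split_mono hr m).2⟩

theorem split_unique {u v z : PBT} (h1 : tle (overT u v) z) (h2 : tle z (under u v)) :
    split z u.size = (u, v) := by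
  have hlo := tle_split_mono h1 u.size
  have hhi := tle_split_mono h2 u.size
  rw [split_over u v] at hlo
  rw [split_under u v] at hhi
  have e1 : (split z u.size).1 = u := tle_antisymm hhi.1 hlo.1
  have e2 : (split z u.size).2 = v := tle_antisymm hhi.2 hlo.2
  rw [Prod.ext_iff]
  exact ⟨e1, e2⟩

end PBT
namespace PBT

/-- `bilin f` as a bundled biadditive map. -/
noncomputable def rowH (f : PBT → PBT → ZY) (x : PBT) : ZY →+ ZY :=
  Finsupp.liftAddHom fun y => zmultiplesHom ZY (f x y)

/-- `bilin f` as a bundled biadditive map. -/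
noncomputable def bilinH (f : PBT → PBT → ZY) : ZY →+ ZY →+ ZY :=
  Finsupp.liftAddHom fun x => zmultiplesHom (ZY →+ ZY) (rowH f x)

theorem bilinH_apply (f : PBT → PBT → ZY) (a b : ZY) : bilinH f a b = bilin f a b := by
  have h1 : bilinH f a = a.sum fun x ax => ax • rowH f x := rfl
  rw [h1, bilin]
  rw [Finsupp.sum, Finsupp.sum, AddMonoidHom.finset_sum_apply]
  refine Finset.sum_congr rfl fun x _ => ?_
  have h2 : (a x • rowH f x) b = a x • rowH f x b := rfl
  rw [h2]
  have h3 : rowH f x b = b.sum fun y c => c • f x y := rfl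
  rw [h3, Finsupp.sum, Finsupp.sum, Finset.smul_sum]
  refine Finset.sum_congr rfl fun y _ => ?_
  rw [smul_smul]

theorem overM_eq (a b : ZY) : overM a b = bilinH (fun x y => S (x.overT y)) a b :=
  (bilinH_apply _ a b).symm

theorem starM_eq (a b : ZY) : starM a b = bilinH starB a b :=
  (bilinH_apply _ a b).symm

theorem bilinH_single_single (f : PBT → PBT → ZY) (x y : PBT) :
    bilinH f (S x) (S y) = f x y := by
  rw [S, bilinH, Finsupp.liftAddHom_apply_single]
  show (1 • rowH f x) (Finsupp.single y 1) = f x y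
  rw [one_smul, rowH, Finsupp.liftAddHom_apply_single]
  exact one_smul _ _

theorem bilinH_sum_sum (f : PBT → PBT → ZY) (s t : Finset PBT) :
    bilinH f (∑ u ∈ s, S u) (∑ v ∈ t, S v) = ∑ u ∈ s, ∑ v ∈ t, f u v := by
  rw [map_sum (bilinH f) S s, AddMonoidHom.finset_sum_apply]
  refine Finset.sum_congr rfl fun u _ => ?_
  rw [map_sum]
  exact Finset.sum_congr rfl fun v _ => bilinH_single_single f u v

theorem bilinH_sum_sum' (f : PBT → PBT → ZY) (s t : Finset PBT) (g h : PBT → PBT) :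
    bilinH f (∑ u ∈ s, S (g u)) (∑ v ∈ t, S (h v)) = ∑ u ∈ s, ∑ v ∈ t, f (g u) (h v) := by
  rw [map_sum (bilinH f) (fun u => S (g u)) s, AddMonoidHom.finset_sum_apply]
  refine Finset.sum_congr rfl fun u _ => ?_
  rw [map_sum]
  exact Finset.sum_congr rfl fun v _ => bilinH_single_single f (g u) (h v)

end PBT
namespace PBT

theorem mem_LF {z x : PBT} : z ∈ (finite_tle_right x).toFinset ↔ tle z x := by
  rw [Set.Finite.mem_toFinset]; exact Iff.rfl

theorem mem_UF {z x : PBT} : z ∈ (finite_tle_left x).toFinset ↔ tle x z := by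
  rw [Set.Finite.mem_toFinset]; exact Iff.rfl

theorem mem_IF {z x y : PBT} :
    z ∈ (finite_interval x y).toFinset ↔ tle (overT x y) z ∧ tle z (under x y) := by
  rw [Set.Finite.mem_toFinset]; exact Iff.rfl

theorem tle_leaf {z : PBT} (h : tle z leaf) : z = leaf :=
  size_eq_zero (by simpa [size] using h.size_eq)

theorem leaf_tle {z : PBT} (h : tle leaf z) : z = leaf :=
  size_eq_zero (by simpa [size] using h.size_eq.symm)

theorem tle_dot {z : PBT} (h : tle z dot) : z = dot :=
  size_eq_one (by simpa [dot, size] using h.size_eq)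

theorem dot_tle {z : PBT} (h : tle dot z) : z = dot :=
  size_eq_one (by simpa [dot, size] using h.size_eq.symm)

theorem P_leaf : P leaf = S leaf := by
  rw [P]
  have : (finite_tle_right leaf).toFinset = {leaf} := by
    ext z; simp only [mem_LF, Finset.mem_singleton]
    exact ⟨tle_leaf, fun h => h ▸ tle_refl leaf⟩
  rw [this, Finset.sum_singleton]

theorem I_leaf : I leaf = S leaf := by
  rw [I]
  have : (finite_tle_left leaf).toFinset = {leaf} := by
    ext z; simp only [mem_UF, Finset.mem_singleton]
    exact ⟨leaf_tle, fun h => h ▸ tle_refl leaf⟩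
  rw [this, Finset.sum_singleton]

theorem P_dot : P dot = S dot := by
  rw [P]
  have : (finite_tle_right dot).toFinset = {dot} := by
    ext z; simp only [mem_LF, Finset.mem_singleton]
    exact ⟨tle_dot, fun h => h ▸ tle_refl dot⟩
  rw [this, Finset.sum_singleton]

theorem I_dot : I dot = S dot := by
  rw [I]
  have : (finite_tle_left dot).toFinset = {dot} := by
    ext z; simp only [mem_UF, Finset.mem_singleton]
    exact ⟨dot_tle, fun h => h ▸ tle_refl dot⟩
  rw [this, Finset.sum_singleton]

/-- `P_x / P_y = P_{x/y}`. -/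
theorem overM_P_P (x y : PBT) : overM (P x) (P y) = P (overT x y) := by
  rw [P, P, overM_eq, bilinH_sum_sum, P]
  rw [← Finset.sum_product']
  refine Finset.sum_bij (fun p _ => overT p.1 p.2) ?_ ?_ ?_ ?_
  · rintro ⟨u, v⟩ hp
    rw [Finset.mem_product] at hp
    exact mem_LF.2 (tle_over (mem_LF.1 hp.1) (mem_LF.1 hp.2))
  · rintro ⟨u, v⟩ hp ⟨u', v'⟩ hp' h
    rw [Finset.mem_product] at hp hp'
    have hs : u.size = u'.size := by
      rw [(mem_LF.1 hp.1).size_eq, (mem_LF.1 hp'.1).size_eq]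
    obtain ⟨rfl, rfl⟩ := over_injective hs h
    rfl
  · intro z hz
    obtain ⟨u, v, rfl, hu, hv⟩ := tle_over_inv (mem_LF.1 hz)
    exact ⟨(u, v), Finset.mem_product.2 ⟨mem_LF.2 hu, mem_LF.2 hv⟩, rfl⟩
  · intro p _; rfl

/-- The lower ideal of `x∖y` is partitioned by the intervals `[u/v, u∖v]`, `u ≤ x`, `v ≤ y`. -/
theorem LF_under_biUnion (x y : PBT) :
    (finite_tle_right (under x y)).toFinset =
      (((finite_tle_right x).toFinset ×ˢ (finite_tle_right y).toFinset).biUnion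
        fun p => (finite_interval p.1 p.2).toFinset) := by
  ext z
  simp only [mem_LF, Finset.mem_biUnion, Finset.mem_product]
  constructor
  · intro hz
    have hsz : x.size ≤ z.size := by rw [hz.size_eq, size_under]; omega
    obtain ⟨h1, h2⟩ := split_mem (z := z) hsz
    have hm := tle_split_mono hz x.size
    rw [split_under] at hm
    exact ⟨((split z x.size).1, (split z x.size).2),
      ⟨hm.1, hm.2⟩, mem_IF.2 ⟨h1, h2⟩⟩
  · rintro ⟨⟨u, v⟩, ⟨hu, hv⟩, hz⟩
    exact (mem_IF.1 hz).2.trans (tle_under hu hv)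

/-- The upper ideal of `x/y` is partitioned by the intervals `[u/v, u∖v]`, `u ≥ x`, `v ≥ y`. -/
theorem UF_over_biUnion (x y : PBT) :
    (finite_tle_left (overT x y)).toFinset =
      (((finite_tle_left x).toFinset ×ˢ (finite_tle_left y).toFinset).biUnion
        fun p => (finite_interval p.1 p.2).toFinset) := by
  ext z
  simp only [mem_UF, Finset.mem_biUnion, Finset.mem_product]
  constructor
  · intro hz
    have hsz : x.size ≤ z.size := by rw [← hz.size_eq, size_over]; omega
    obtain ⟨h1, h2⟩ := split_mem (z := z) hsz
    have hm := tle_split_mono hz x.size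
    rw [split_over] at hm
    exact ⟨((split z x.size).1, (split z x.size).2),
      ⟨hm.1, hm.2⟩, mem_IF.2 ⟨h1, h2⟩⟩
  · rintro ⟨⟨u, v⟩, ⟨hu, hv⟩, hz⟩
    exact (tle_over hu hv).trans (mem_IF.1 hz).1

theorem interval_disjoint {n : ℕ} {s t : Finset PBT}
    (hs : ∀ u ∈ s, u.size = n) :
    Set.PairwiseDisjoint ((s ×ˢ t : Finset (PBT × PBT)) : Set (PBT × PBT))
      (fun p => (finite_interval p.1 p.2).toFinset) := by
  rintro ⟨u, v⟩ hp ⟨u', v'⟩ hp' hne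
  rw [Finset.coe_product] at hp hp'
  apply Finset.disjoint_left.2
  intro z hz hz'
  obtain ⟨h1, h2⟩ := mem_IF.1 hz
  obtain ⟨h1', h2'⟩ := mem_IF.1 hz'
  have hsz : u.size = u'.size := by
    rw [hs u (Set.mem_prod.1 hp).1, hs u' (Set.mem_prod.1 hp').1]
  have e := split_unique h1 h2
  have e' := split_unique h1' h2'
  rw [hsz] at e
  rw [e] at e'
  exact hne e'

end PBT
namespace PBT

/-- `P_x * P_y = P_{x∖y}`. -/
theorem starM_P_P (x y : PBT) : starM (P x) (P y) = P (under x y) := by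
  rw [P, P, starM_eq, bilinH_sum_sum, ← Finset.sum_product', P, LF_under_biUnion,
    Finset.sum_biUnion (interval_disjoint (n := x.size) fun u hu => (mem_LF.1 hu).size_eq)]
  rfl

/-- `I_x * I_y = I_{x/y}`. -/
theorem starM_I_I (x y : PBT) : starM (I x) (I y) = I (overT x y) := by
  rw [I, I, starM_eq, bilinH_sum_sum, ← Finset.sum_product', I, UF_over_biUnion,
    Finset.sum_biUnion (interval_disjoint (n := x.size) fun u hu => (mem_UF.1 hu).size_eq.symm)]
  rfl

theorem UF_node_leaf (x : PBT) :
    (finite_tle_left (node leaf x)).toFinset =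
      (finite_tle_left x).toFinset.image (node leaf) := by
  ext z
  simp only [mem_UF, Finset.mem_image]
  constructor
  · intro h
    obtain ⟨x', hx', rfl⟩ := tle_node_leaf h
    exact ⟨x', hx', rfl⟩
  · rintro ⟨x', hx', rfl⟩
    exact tle_node_right leaf hx'

theorem I_node_leaf (x : PBT) :
    I (node leaf x) = ∑ x' ∈ (finite_tle_left x).toFinset, S (node leaf x') := by
  rw [I, UF_node_leaf, Finset.sum_image]
  intro a _ b _ h
  exact (node.injEq _ _ _ _ ▸ h).2

/-- The key upper-ideal splitting for condition 4. -/
theorem tle_corner {x y z : PBT} (h : tle (node (node leaf x) y) z) :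
    (∃ x' y', tle x x' ∧ tle y y' ∧ z = node (node leaf x') y') ∨
      tle (node leaf (node x y)) z := by
  induction h with
  | refl => exact Or.inl ⟨x, y, tle_refl x, tle_refl y, rfl⟩
  | tail _ h ih =>
    rcases ih with ⟨x', y', hx, hy, rfl⟩ | hz
    · cases h with
      | rot a b c => exact Or.inr (tle_node_right leaf (tle_node hx hy))
      | left b h =>
        obtain ⟨x'', h'', rfl⟩ := Rot_node_leaf h
        exact Or.inl ⟨x'', y', hx.tail h'', hy, rfl⟩
      | right a h => exact Or.inl ⟨x', _, hx, hy.tail h, rfl⟩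
    · exact Or.inr (hz.tail h)

theorem UF_corner (x y : PBT) :
    (finite_tle_left (node (node leaf x) y)).toFinset =
      (((finite_tle_left x).toFinset ×ˢ (finite_tle_left y).toFinset).image
        fun p => node (node leaf p.1) p.2) ∪
      (finite_tle_left (node leaf (node x y))).toFinset := by
  ext z
  simp only [mem_UF, Finset.mem_union, Finset.mem_image, Finset.mem_product]
  constructor
  · intro h
    rcases tle_corner h with ⟨x', y', hx, hy, rfl⟩ | hz
    · exact Or.inl ⟨(x', y'), ⟨hx, hy⟩, rfl⟩
    · exact Or.inr hz
  · rintro (⟨⟨x', y'⟩, ⟨hx, hy⟩, rfl⟩ | hz)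
    · exact tle_node (tle_node_right leaf hx) hy
    · exact (Rot.tle (Rot.rot leaf x y)).trans hz

theorem UF_corner_disjoint (x y : PBT) :
    Disjoint
      ((((finite_tle_left x).toFinset ×ˢ (finite_tle_left y).toFinset).image
        fun p => node (node leaf p.1) p.2))
      (finite_tle_left (node leaf (node x y))).toFinset := by
  rw [Finset.disjoint_left]
  rintro z hz hz'
  obtain ⟨⟨x', y'⟩, _, rfl⟩ := Finset.mem_image.1 hz
  obtain ⟨w, _, hw⟩ := tle_node_leaf (mem_UF.1 hz')
  exact absurd (node.injEq _ _ _ _ ▸ hw).1 (by simp)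

/-- `I_{((|,x),y)} = ∑_{x'≥x, y'≥y} S_{((|,x'),y')} + I_{(|,(x,y))}`. -/
theorem I_corner (x y : PBT) :
    I (node (node leaf x) y) =
      (∑ p ∈ (finite_tle_left x).toFinset ×ˢ (finite_tle_left y).toFinset,
        S (node (node leaf p.1) p.2)) + I (node leaf (node x y)) := by
  rw [I, UF_corner, Finset.sum_union (UF_corner_disjoint x y), ← I, Finset.sum_image]
  rintro ⟨a, b⟩ _ ⟨c, d⟩ _ h
  simp only [node.injEq] at h
  rw [Prod.ext_iff]
  exact ⟨h.1.2, h.2⟩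

/-- `I_{(|,x)} / I_{(|,y)} = ∑_{x'≥x, y'≥y} S_{((|,x'),y')}`. -/
theorem overM_I_node_leaf (x y : PBT) :
    overM (I (node leaf x)) (I (node leaf y)) =
      ∑ p ∈ (finite_tle_left x).toFinset ×ˢ (finite_tle_left y).toFinset,
        S (node (node leaf p.1) p.2) := by
  rw [I_node_leaf, I_node_leaf, overM_eq, bilinH_sum_sum', ← Finset.sum_product']
  rfl

end PBT
namespace PBT

theorem S_mem_closure : ∀ (n : ℕ) (x : PBT), fstat x < n →
    S x ∈ AddSubgroup.closure (Set.range P) := by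
  intro n
  induction n with
  | zero => intro x hx; omega
  | succ n ih =>
    intro x hx
    have hPx : P x ∈ AddSubgroup.closure (Set.range P) :=
      AddSubgroup.subset_closure ⟨x, rfl⟩
    have hx_mem : x ∈ (finite_tle_right x).toFinset := mem_LF.2 (tle_refl x)
    have hsum : S x = P x - ∑ y ∈ (finite_tle_right x).toFinset.erase x, S y := by
      rw [P, ← Finset.add_sum_erase _ _ hx_mem]
      abel
    rw [hsum]
    refine sub_mem hPx (sum_mem fun y hy => ?_)
    have hyx : tle y x := mem_LF.1 (Finset.mem_of_mem_erase hy)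
    have hne : y ≠ x := Finset.ne_of_mem_erase hy
    exact ih y (by have := hyx.fstat_lt hne; omega)

theorem mem_closure_P (a : ZY) : a ∈ AddSubgroup.closure (Set.range P) := by
  induction a using Finsupp.induction with
  | zero => exact zero_mem _
  | single_add x c f _ _ ihf =>
    refine add_mem ?_ ihf
    have h1 : Finsupp.single x c = c • S x := by
      rw [S, Finsupp.smul_single, smul_eq_mul, mul_one]
    rw [h1]
    exact zsmul_mem (S_mem_closure (fstat x + 1) x (Nat.lt_succ_self _)) c

theorem eq_on_P {ψ χ : ZY →+ ZY} (h : ∀ x : PBT, ψ (P x) = χ (P x)) (a : ZY) :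
    ψ a = χ a := by
  have ha : a ∈ AddSubgroup.closure (Set.range P) := mem_closure_P a
  induction ha using AddSubgroup.closure_induction with
  | mem x hx => obtain ⟨y, rfl⟩ := hx; exact h y
  | zero => rw [map_zero, map_zero]
  | add x y _ _ hx hy => rw [map_add, map_add, hx, hy]
  | neg x _ hx => rw [map_neg, map_neg, hx]

theorem eq_on_P_pair {F G : ZY →+ ZY →+ ZY} (h : ∀ x y : PBT, F (P x) (P y) = G (P x) (P y))
    (a b : ZY) : F a b = G a b := by
  have h1 : ∀ (x : PBT) (b : ZY), F (P x) b = G (P x) b := fun x => eq_on_P (h x)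
  exact eq_on_P (ψ := F.flip b) (χ := G.flip b) (fun x => h1 x b) a

end PBT
namespace PBT

theorem under_dot (v : PBT) : under dot v = node leaf v := rfl

theorem over_node_leaf (u v : PBT) : overT u (node leaf v) = node u v := rfl

theorem overM_neg_neg (a b : ZY) : overM (-a) (-b) = overM a b := by
  rw [overM_eq, overM_eq, map_neg (bilinH _) a, AddMonoidHom.neg_apply, map_neg, neg_neg]

theorem starM_neg_neg (a b : ZY) : starM (-a) (-b) = starM a b := by
  rw [starM_eq, starM_eq, map_neg (bilinH _) a, AddMonoidHom.neg_apply, map_neg, neg_neg]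

theorem star_dot_P (v : PBT) : starM (S dot) (P v) = P (node leaf v) := by
  rw [← P_dot, starM_P_P, under_dot]

/-- The right-hand side of the fourth condition, evaluated on `P`-basis elements. -/
theorem rhs4 (u v : PBT) :
    overM (I (node leaf u)) (I (node leaf v)) - starM (I (node leaf u)) (I (node leaf v))
      = - I (node leaf (node u v)) := by
  rw [overM_I_node_leaf, starM_I_I]
  have : overT (node leaf u) (node leaf v) = node (node leaf u) v := rfl
  rw [this, I_corner]
  abel

noncomputable def oHom : ZY →+ ZY →+ ZY := bilinH (fun x y => S (x.overT y))

noncomputable def sHom : ZY →+ ZY →+ ZY := bilinH starB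

theorem oHom_apply (a b : ZY) : oHom a b = overM a b := (overM_eq a b).symm

theorem sHom_apply (a b : ZY) : sHom a b = starM a b := (starM_eq a b).symm

end PBT
open PBT in
/-- The family of Coxeter transformations is the unique family of additive maps
satisfying the four listed conditions; in particular these conditions force
`φ(P_x) = -I_x` for every planar binary tree `x`. -/
theorem coxeter_transformation_characterization (φ : ZY →+ ZY) :
    (φ (S .leaf) = - S .leaf ∧
      φ (S dot) = - S dot ∧
      (∀ a b : ZY, φ (overM a b) = - starM (φ a) (φ b)) ∧
      (∀ a b : ZY, φ (starM (S dot) (overM a (starM (S dot) b))) =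
          overM (φ (starM (S dot) a)) (φ (starM (S dot) b))
            - starM (φ (starM (S dot) a)) (φ (starM (S dot) b))))
    ↔ (∀ x : PBT, φ (P x) = - I x) := by
  constructor
  · rintro ⟨h1, h2, h3, h4⟩ x
    suffices h : ∀ (n : ℕ) (x : PBT), x.size ≤ n → φ (P x) = - I x from h x.size x le_rfl
    intro n
    induction n with
    | zero =>
      intro x hx
      obtain rfl := size_eq_zero (Nat.le_zero.1 hx)
      rw [P_leaf, I_leaf]
      exact h1
    | succ n ih =>
      intro x hx
      cases x with
      | leaf => rw [P_leaf, I_leaf]; exact h1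
      | node a b =>
        cases a with
        | leaf =>
          cases b with
          | leaf =>
            show φ (P dot) = - I dot
            rw [P_dot, I_dot]
            exact h2
          | node u v =>
            have hu : (node leaf u).size ≤ n := by simp only [size] at hx ⊢; omega
            have hv : (node leaf v).size ≤ n := by simp only [size] at hx ⊢; omega
            have e := h4 (P u) (P v)
            rw [star_dot_P v, overM_P_P, over_node_leaf, star_dot_P (node u v),
              star_dot_P u, ih _ hu, ih _ hv, overM_neg_neg, starM_neg_neg] at e
            show φ (P (node leaf (node u v))) = - I (node leaf (node u v))
            rw [e, rhs4]
        | node a₁ a₂ =>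
          have hA : (node a₁ a₂).size ≤ n := by simp only [size] at hx ⊢; omega
          have hB : (node leaf b).size ≤ n := by simp only [size] at hx ⊢; omega
          have e := h3 (P (node a₁ a₂)) (P (node leaf b))
          rw [overM_P_P, over_node_leaf, ih _ hA, ih _ hB, starM_neg_neg,
            starM_I_I, over_node_leaf] at e
          exact e
  · intro hP
    refine ⟨?_, ?_, ?_, ?_⟩
    · rw [← P_leaf, hP, I_leaf, P_leaf]
    · rw [← P_dot, hP, I_dot, P_dot]
    · -- condition 3
      intro a b
      have key : ∀ x y : PBT,
          (oHom.compr₂ φ) (P x) (P y) = (-((sHom.comp φ).compl₂ φ)) (P x) (P y) := by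
        intro x y
        simp only [AddMonoidHom.compr₂_apply, AddMonoidHom.neg_apply,
          AddMonoidHom.compl₂_apply, AddMonoidHom.comp_apply, oHom_apply, sHom_apply]
        rw [overM_P_P, hP, hP, hP, starM_neg_neg, starM_I_I]
      have h := eq_on_P_pair key a b
      simpa only [AddMonoidHom.compr₂_apply, AddMonoidHom.neg_apply,
        AddMonoidHom.compl₂_apply, AddMonoidHom.comp_apply, oHom_apply, sHom_apply] using h
    · -- condition 4
      intro a b
      have key : ∀ x y : PBT,
          (((oHom.compl₂ (sHom (S dot))).compr₂ (sHom (S dot))).compr₂ φ) (P x) (P y) =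
            ((oHom.comp (φ.comp (sHom (S dot)))).compl₂ (φ.comp (sHom (S dot))) -
              (sHom.comp (φ.comp (sHom (S dot)))).compl₂ (φ.comp (sHom (S dot)))) (P x) (P y) := by
        intro x y
        simp only [AddMonoidHom.compr₂_apply, AddMonoidHom.compl₂_apply,
          AddMonoidHom.comp_apply, AddMonoidHom.sub_apply, oHom_apply, sHom_apply]
        rw [star_dot_P y, overM_P_P, over_node_leaf, star_dot_P (node x y),
          star_dot_P x, hP, hP, hP, overM_neg_neg, starM_neg_neg, rhs4]
      have h := eq_on_P_pair key a b
      simpa only [AddMonoidHom.compr₂_apply, AddMonoidHom.compl₂_apply,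
        AddMonoidHom.comp_apply, AddMonoidHom.sub_apply, oHom_apply, sHom_apply] using h
end

section
/- For every integer j ≥ 1, the following identity holds in the ring ℚ[[x]] of formal power series: −∑_{n ≥ 1, j ∣ 2n} (j/(2n)) · (−1)^{2n·n/j} · x^{2n/j} = ∑_{n ≥ 1, j ∣ 2n} (j/(2n)) · λ(2n/j) · (−1)^{2n(n−1)/j} · (x·(1−x²)^{−1})^{2n/j}. (Both infinite sums are well defined coefficientwise, since the summand indexed by n has order ≥ 2n/j in x, and 1−x² is invertible in ℚ[[x]].) -/
/-- `λ(m) = (−1)^(m(m−1)/2) · binomial(m−1, ⌊(m−1)/2⌋)`. -/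
def lam (m : ℕ) : ℤ := (-1) ^ (m * (m - 1) / 2) * (m - 1).choose ((m - 1) / 2)

open PowerSeries in
/-- The summand indexed by `n` on the left-hand side:
`(j/(2n)) · (−1)^(2n·n/j) · x^(2n/j)` when `j ∣ 2n`, and `0` otherwise. -/
noncomputable def lhsTerm (j n : ℕ) : PowerSeries ℚ :=
  if j ∣ 2 * n then
    C ((j : ℚ) / (2 * n) * (-1) ^ (2 * n * n / j)) * X ^ (2 * n / j)
  else 0

open PowerSeries in
/-- The summand indexed by `n` on the right-hand side:
`(j/(2n)) · λ(2n/j) · (−1)^(2n(n−1)/j) · (x·(1−x²)⁻¹)^(2n/j)` when `j ∣ 2n`. -/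
noncomputable def rhsTerm (j n : ℕ) : PowerSeries ℚ :=
  if j ∣ 2 * n then
    C ((j : ℚ) / (2 * n) * (lam (2 * n / j) : ℚ) * (-1) ^ (2 * n * (n - 1) / j)) *
      (X * (1 - X ^ 2)⁻¹) ^ (2 * n / j)
  else 0

namespace SeriesIdentityAux
open Nat Finset PowerSeries

open Nat Finset PowerSeries



/-- `S l` is the power series `(1 - X^2)^{-(l+1)}` over `ℚ`. -/
noncomputable def S (l : ℕ) : PowerSeries ℚ :=
  PowerSeries.mk fun k => if 2 ∣ k then ((l + k / 2).choose (k / 2) : ℚ) else 0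

lemma one_sub_sq_mul_S_zero : ((1 : ℚ⟦X⟧) - X ^ 2) * S 0 = 1 := by
  ext k
  rw [sub_mul, one_mul, map_sub, mul_comm, PowerSeries.coeff_mul_X_pow']
  match k with
  | 0 => simp [S]
  | 1 => simp [S]
  | (k+2) =>
    have h1 : 2 ≤ k + 2 := by omega
    rw [if_pos h1]
    simp only [S, coeff_mk, Nat.add_sub_cancel]
    have h2 : (k + 2) / 2 = k / 2 + 1 := by omega
    have h3 : (2 ∣ k + 2) ↔ (2 ∣ k) := by omega
    by_cases hd : 2 ∣ k
    · rw [if_pos (h3.mpr hd), if_pos hd, h2]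
      simp [PowerSeries.coeff_one]
    · rw [if_neg (fun h => hd (h3.mp h)), if_neg hd]
      simp [PowerSeries.coeff_one]

lemma one_sub_sq_mul_S_succ (l : ℕ) : ((1 : ℚ⟦X⟧) - X ^ 2) * S (l + 1) = S l := by
  ext k
  rw [sub_mul, one_mul, map_sub, mul_comm, PowerSeries.coeff_mul_X_pow']
  match k with
  | 0 => simp [S]
  | 1 => simp [S]
  | (k+2) =>
    have h1 : 2 ≤ k + 2 := by omega
    rw [if_pos h1]
    simp only [S, coeff_mk, Nat.add_sub_cancel]
    have h2 : (k + 2) / 2 = k / 2 + 1 := by omega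
    have h3 : (2 ∣ k + 2) ↔ (2 ∣ k) := by omega
    by_cases hd : 2 ∣ k
    · simp only [h2, h3, if_pos hd]
      have : (l + 1 + (k / 2 + 1)).choose (k / 2 + 1)
          = (l + 1 + k / 2).choose (k / 2) + (l + 1 + k / 2).choose (k / 2 + 1) := by
        rw [show l + 1 + (k / 2 + 1) = (l + 1 + k / 2) + 1 by ring]
        exact Nat.choose_succ_succ' (l + 1 + k / 2) (k / 2)
      rw [this]
      push_cast
      have : l + 1 + k / 2 = l + (k / 2 + 1) := by ring
      rw [this]
      ring
    · simp only [h2, h3, if_neg hd]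
      ring

lemma pow_mul_S (l : ℕ) : ((1 : ℚ⟦X⟧) - X ^ 2) ^ (l + 1) * S l = 1 := by
  induction l with
  | zero => simpa using one_sub_sq_mul_S_zero
  | succ l ih =>
    rw [pow_succ, mul_assoc, one_sub_sq_mul_S_succ l]
    exact ih

lemma inv_one_sub_sq : ((1 : ℚ⟦X⟧) - X ^ 2)⁻¹ = S 0 := by
  rw [PowerSeries.inv_eq_iff_mul_eq_one]
  · rw [mul_comm]; exact one_sub_sq_mul_S_zero
  · simp

/-- `Y = X / (1 - X²)`. -/
noncomputable def Y : ℚ⟦X⟧ := X * (1 - X ^ 2)⁻¹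

lemma one_sub_sq_ne : ((1 : ℚ⟦X⟧) - X ^ 2) ≠ 0 := by
  intro h
  have := congrArg (PowerSeries.constantCoeff) h
  simp at this

lemma Y_pow (l : ℕ) : Y ^ (l + 1) = X ^ (l + 1) * S l := by
  have h1 : ((1 : ℚ⟦X⟧) - X ^ 2) ^ (l + 1) * (S 0) ^ (l + 1) = 1 := by
    rw [← mul_pow, one_sub_sq_mul_S_zero, one_pow]
  have h2 := pow_mul_S l
  have h3 : (S 0) ^ (l + 1) = S l :=
    mul_left_cancel₀ (pow_ne_zero _ one_sub_sq_ne) (h1.trans h2.symm)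
  rw [Y, inv_one_sub_sq, mul_pow, h3]

lemma coeff_Y_pow' (l k : ℕ) (hl : 1 ≤ l) :
    PowerSeries.coeff k (Y ^ l) =
      if l ≤ k ∧ 2 ∣ (k - l) then (((l - 1) + (k - l) / 2).choose ((k - l) / 2) : ℚ)
      else 0 := by
  obtain ⟨m, rfl⟩ : ∃ m, l = m + 1 := ⟨l - 1, by omega⟩
  rw [Y_pow, PowerSeries.coeff_X_pow_mul']
  by_cases h : m + 1 ≤ k
  · rw [if_pos h]
    simp only [S, coeff_mk, Nat.add_sub_cancel]
    by_cases hd : 2 ∣ (k - (m + 1))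
    · rw [if_pos hd, if_pos ⟨h, hd⟩]
    · rw [if_neg hd, if_neg (fun hc => hd hc.2)]
  · rw [if_neg h, if_neg (fun hc => h hc.1)]




def fo (K r : ℕ) : ℚ :=
  if r ≤ K then
    (-1 : ℚ) ^ (r + 1) * ((2 * r).choose r) * ((K + r).choose (K - r)) / (2 * r + 1)
  else 0

def go (K r : ℕ) : ℚ :=
  if r ≤ K + 1 then
    (-1 : ℚ) ^ r * r * ((2 * r).choose r) * ((K + r).choose (K + 1 - r)) / (K + 1)
  else 0

lemma cert_o (K r : ℕ) :
    (2 * (K : ℚ) + 3) * fo (K + 1) r - (2 * K + 1) * fo K r = go K (r + 1) - go K r := by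
  rcases le_or_gt r K with hr | hr
  · -- r ≤ K
    rcases Nat.eq_zero_or_pos r with rfl | hr0
    · -- r = 0
      simp only [fo, go, if_pos (show 0 ≤ K + 1 by omega), if_pos (show 0 ≤ K by omega),
        if_pos (show 0 + 1 ≤ K + 1 by omega)]
      simp only [Nat.mul_zero, Nat.choose_self, Nat.sub_self, Nat.choose_zero_right,
        Nat.add_zero, Nat.sub_zero, Nat.zero_add, Nat.mul_one,
        show K + 1 - (0 + 1) = K by omega, show 2 * (0 + 1) = 2 by omega,
        Nat.choose_succ_self_right, pow_zero, pow_one]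
      have h1 : ((K + 1 : ℕ) : ℚ) ≠ 0 := by positivity
      push_cast
      field_simp
      ring
    · -- 1 ≤ r ≤ K
      obtain ⟨s, rfl⟩ : ∃ s, r = s + 1 := ⟨r - 1, by omega⟩
      obtain ⟨d, rfl⟩ : ∃ d, K = s + 1 + d := ⟨K - (s + 1), by omega⟩
      simp only [fo, go, if_pos (show s + 1 ≤ s + 1 + d + 1 by omega),
        if_pos (show s + 1 ≤ s + 1 + d by omega),
        if_pos (show s + 1 + 1 ≤ s + 1 + d + 1 by omega)]
      simp only [show 2 * (s + 1) = 2 * s + 2 by omega,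
        show 2 * (s + 1 + 1) = 2 * s + 4 by omega,
        show s + 1 + d + 1 + (s + 1) = 2 * s + d + 3 by omega,
        show s + 1 + d + 1 - (s + 1) = d + 1 by omega,
        show s + 1 + d + (s + 1) = 2 * s + d + 2 by omega,
        show s + 1 + d - (s + 1) = d by omega,
        show s + 1 + d + (s + 1 + 1) = 2 * s + d + 3 by omega,
        show s + 1 + d + 1 - (s + 1 + 1) = d by omega]
      have hB1 : (((2 * s + 2).choose (s + 1) : ℕ) : ℚ)
          = ((2 * s + 2)! : ℚ) / (((s + 1)! : ℚ) * ((s + 1)! : ℚ)) := by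
        rw [Nat.cast_choose ℚ (show s + 1 ≤ 2 * s + 2 by omega),
          show 2 * s + 2 - (s + 1) = s + 1 by omega]
      have hB2 : (((2 * s + 4).choose (s + 1 + 1) : ℕ) : ℚ)
          = ((2 * s + 4)! : ℚ) / (((s + 2)! : ℚ) * ((s + 2)! : ℚ)) := by
        rw [Nat.cast_choose ℚ (show s + 1 + 1 ≤ 2 * s + 4 by omega),
          show 2 * s + 4 - (s + 1 + 1) = s + 2 by omega,
          show s + 1 + 1 = s + 2 by omega]
      have hB3 : (((2 * s + d + 3).choose (d + 1) : ℕ) : ℚ)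
          = ((2 * s + d + 3)! : ℚ) / (((d + 1)! : ℚ) * ((2 * s + 2)! : ℚ)) := by
        rw [Nat.cast_choose ℚ (show d + 1 ≤ 2 * s + d + 3 by omega),
          show 2 * s + d + 3 - (d + 1) = 2 * s + 2 by omega]
      have hB4 : (((2 * s + d + 2).choose d : ℕ) : ℚ)
          = ((2 * s + d + 2)! : ℚ) / ((d ! : ℚ) * ((2 * s + 2)! : ℚ)) := by
        rw [Nat.cast_choose ℚ (show d ≤ 2 * s + d + 2 by omega),
          show 2 * s + d + 2 - d = 2 * s + 2 by omega]
      have hB5 : (((2 * s + d + 3).choose d : ℕ) : ℚ)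
          = ((2 * s + d + 3)! : ℚ) / ((d ! : ℚ) * ((2 * s + 3)! : ℚ)) := by
        rw [Nat.cast_choose ℚ (show d ≤ 2 * s + d + 3 by omega),
          show 2 * s + d + 3 - d = 2 * s + 3 by omega]
      have hB6 : (((2 * s + d + 2).choose (d + 1) : ℕ) : ℚ)
          = ((2 * s + d + 2)! : ℚ) / (((d + 1)! : ℚ) * ((2 * s + 1)! : ℚ)) := by
        rw [Nat.cast_choose ℚ (show d + 1 ≤ 2 * s + d + 2 by omega),
          show 2 * s + d + 2 - (d + 1) = 2 * s + 1 by omega]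
      rw [hB1, hB2, hB3, hB4, hB5, hB6]
      have h24 : (2 * s + 4)! = (2 * s + 4) * (2 * s + 3)! := by
        rw [show 2 * s + 4 = 2 * s + 3 + 1 by omega]; exact Nat.factorial_succ _
      have h23 : (2 * s + 3)! = (2 * s + 3) * (2 * s + 2)! := by
        rw [show 2 * s + 3 = 2 * s + 2 + 1 by omega]; exact Nat.factorial_succ _
      have h22 : (2 * s + 2)! = (2 * s + 2) * (2 * s + 1)! := by
        rw [show 2 * s + 2 = 2 * s + 1 + 1 by omega]; exact Nat.factorial_succ _
      have hs2 : (s + 2)! = (s + 2) * (s + 1)! := by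
        rw [show s + 2 = s + 1 + 1 by omega]; exact Nat.factorial_succ _
      have h3d : (2 * s + d + 3)! = (2 * s + d + 3) * (2 * s + d + 2)! := by
        rw [show 2 * s + d + 3 = 2 * s + d + 2 + 1 by omega]; exact Nat.factorial_succ _
      have hd1 : (d + 1)! = (d + 1) * d ! := Nat.factorial_succ _
      rw [h24, h23, h22, hs2, h3d, hd1]
      have ne1 : ((2 * s + 1)! : ℚ) ≠ 0 := Nat.cast_ne_zero.mpr (Nat.factorial_ne_zero _)
      have ne2 : ((s + 1)! : ℚ) ≠ 0 := Nat.cast_ne_zero.mpr (Nat.factorial_ne_zero _)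
      have ne3 : ((2 * s + d + 2)! : ℚ) ≠ 0 := Nat.cast_ne_zero.mpr (Nat.factorial_ne_zero _)
      have ne4 : (d ! : ℚ) ≠ 0 := Nat.cast_ne_zero.mpr (Nat.factorial_ne_zero _)
      push_cast
      field_simp
      ring
  · rcases Nat.lt_or_ge r (K + 2) with hr2 | hr2
    · -- r = K + 1
      obtain rfl : r = K + 1 := by omega
      simp only [fo, go, if_pos (show K + 1 ≤ K + 1 by omega),
        if_neg (show ¬ K + 1 ≤ K by omega), if_neg (show ¬ K + 1 + 1 ≤ K + 1 by omega)]
      simp only [show K + 1 + (K + 1) = 2 * K + 2 by omega, Nat.sub_self,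
        show K + 1 - (K + 1) = 0 by omega, Nat.choose_zero_right, Nat.cast_one, mul_one,
        show 2 * (K + 1) = 2 * K + 2 by omega]
      have h1 : (2 * (K : ℚ) + 3) ≠ 0 := by positivity
      have h2 : ((K : ℚ) + 1) ≠ 0 := by positivity
      push_cast
      field_simp
      ring
    · -- r ≥ K + 2
      simp only [fo, go, if_neg (show ¬ r ≤ K + 1 by omega),
        if_neg (show ¬ r ≤ K by omega), if_neg (show ¬ r + 1 ≤ K + 1 by omega)]
      ring

lemma fo_sum (K : ℕ) : ∑ r ∈ range (K + 1), fo K r = -1 / (2 * (K : ℚ) + 1) := by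
  induction K with
  | zero => simp [fo]
  | succ K ih =>
    have key : ∑ r ∈ range (K + 2), ((2 * (K : ℚ) + 3) * fo (K + 1) r)
        = ∑ r ∈ range (K + 2), ((2 * (K : ℚ) + 1) * fo K r + (go K (r + 1) - go K r)) := by
      refine Finset.sum_congr rfl fun r _ => ?_
      have := cert_o K r
      linarith
    rw [← Finset.mul_sum] at key
    rw [Finset.sum_add_distrib, ← Finset.mul_sum, Finset.sum_range_sub (go K)] at key
    have hgo1 : go K (K + 2) = 0 := by simp only [go, if_neg (show ¬ K + 2 ≤ K + 1 by omega)]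
    have hgo0 : go K 0 = 0 := by simp [go]
    have hfoK : ∑ r ∈ range (K + 2), fo K r = -1 / (2 * (K : ℚ) + 1) := by
      rw [show K + 2 = K + 1 + 1 by omega, Finset.sum_range_succ, ih,
        show fo K (K + 1) = 0 by simp only [fo, if_neg (show ¬ K + 1 ≤ K by omega)], add_zero]
    rw [hgo1, hgo0, hfoK] at key
    have h1 : (2 * (K : ℚ) + 3) ≠ 0 := by positivity
    have h2 : (2 * (K : ℚ) + 1) ≠ 0 := by positivity
    rw [show K + 1 + 1 = K + 2 by omega]
    push_cast
    rw [show 2 * ((K : ℚ) + 1) + 1 = 2 * (K : ℚ) + 3 by ring, eq_div_iff h1]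
    field_simp at key
    have key2 : ((2 * (K : ℚ) + 3) * ∑ i ∈ range (K + 2), fo (K + 1) i) * (2 * (K : ℚ) + 1)
        = (-1) * (2 * (K : ℚ) + 1) := by rw [key]; ring
    have key3 := mul_right_cancel₀ h2 key2
    linarith




def fe (K s : ℕ) : ℚ :=
  if s + 1 ≤ K then
    (-1 : ℚ) ^ (s + 1) * ((2 * s + 1).choose s) * ((K + s).choose (K - s - 1)) / (2 * s + 2)
  else 0

def ge (K s : ℕ) : ℚ :=
  if s ≤ K then
    (-1 : ℚ) ^ s * (2 * K + 1) * s * ((2 * s).choose s) * ((K + s).choose (K - s))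
      / (K * (K + 1))
  else 0

lemma cert_e (K s : ℕ) (hK : 1 ≤ K) :
    (2 * (K : ℚ) + 2) * fe (K + 1) s - 2 * K * fe K s = ge K (s + 1) - ge K s := by
  rcases le_or_gt (s + 1) K with hs | hs
  · -- generic: s + 1 ≤ K
    obtain ⟨d, rfl⟩ : ∃ d, K = s + 1 + d := ⟨K - (s + 1), by omega⟩
    simp only [fe, ge, if_pos (show s + 1 ≤ s + 1 + d by omega),
      if_pos (show s + 1 ≤ s + 1 + d + 1 by omega),
      if_pos (show s ≤ s + 1 + d by omega),
      if_pos (show s + 1 ≤ s + 1 + d by omega)]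
    simp only [show 2 * (s + 1) = 2 * s + 2 by omega,
      show s + 1 + d + 1 + s = 2 * s + d + 2 by omega,
      show s + 1 + d + 1 - s - 1 = d + 1 by omega,
      show s + 1 + d + s = 2 * s + d + 1 by omega,
      show s + 1 + d - s - 1 = d by omega,
      show 2 * (s + 1) + 1 = 2 * s + 3 by omega,
      show s + 1 + d + (s + 1) = 2 * s + d + 2 by omega,
      show s + 1 + d - (s + 1) = d by omega,
      show s + 1 + d - s = d + 1 by omega,
      show d + 1 - 1 = d by omega]
    have hB1 : (((2 * s + 1).choose s : ℕ) : ℚ)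
        = ((2 * s + 1)! : ℚ) / ((s ! : ℚ) * ((s + 1)! : ℚ)) := by
      rw [Nat.cast_choose ℚ (show s ≤ 2 * s + 1 by omega),
        show 2 * s + 1 - s = s + 1 by omega]
    have hB2 : (((2 * s).choose s : ℕ) : ℚ)
        = ((2 * s)! : ℚ) / ((s ! : ℚ) * (s ! : ℚ)) := by
      rw [Nat.cast_choose ℚ (show s ≤ 2 * s by omega),
        show 2 * s - s = s by omega]
    have hB3 : (((2 * s + 2).choose (s + 1) : ℕ) : ℚ)
        = ((2 * s + 2)! : ℚ) / (((s + 1)! : ℚ) * ((s + 1)! : ℚ)) := by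
      rw [Nat.cast_choose ℚ (show s + 1 ≤ 2 * s + 2 by omega),
        show 2 * s + 2 - (s + 1) = s + 1 by omega]
    have hB4 : (((2 * s + d + 2).choose (d + 1) : ℕ) : ℚ)
        = ((2 * s + d + 2)! : ℚ) / (((d + 1)! : ℚ) * ((2 * s + 1)! : ℚ)) := by
      rw [Nat.cast_choose ℚ (show d + 1 ≤ 2 * s + d + 2 by omega),
        show 2 * s + d + 2 - (d + 1) = 2 * s + 1 by omega]
    have hB5 : (((2 * s + d + 1).choose d : ℕ) : ℚ)
        = ((2 * s + d + 1)! : ℚ) / ((d ! : ℚ) * ((2 * s + 1)! : ℚ)) := by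
      rw [Nat.cast_choose ℚ (show d ≤ 2 * s + d + 1 by omega),
        show 2 * s + d + 1 - d = 2 * s + 1 by omega]
    have hB6 : (((2 * s + d + 2).choose d : ℕ) : ℚ)
        = ((2 * s + d + 2)! : ℚ) / ((d ! : ℚ) * ((2 * s + 2)! : ℚ)) := by
      rw [Nat.cast_choose ℚ (show d ≤ 2 * s + d + 2 by omega),
        show 2 * s + d + 2 - d = 2 * s + 2 by omega]
    have hB7 : (((2 * s + d + 1).choose (d + 1) : ℕ) : ℚ)
        = ((2 * s + d + 1)! : ℚ) / (((d + 1)! : ℚ) * ((2 * s)! : ℚ)) := by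
      rw [Nat.cast_choose ℚ (show d + 1 ≤ 2 * s + d + 1 by omega),
        show 2 * s + d + 1 - (d + 1) = 2 * s by omega]
    rw [hB1, hB2, hB3, hB4, hB5, hB6, hB7]
    have h22 : (2 * s + 2)! = (2 * s + 2) * (2 * s + 1)! := by
      rw [show 2 * s + 2 = 2 * s + 1 + 1 by omega]; exact Nat.factorial_succ _
    have h21 : (2 * s + 1)! = (2 * s + 1) * (2 * s)! := Nat.factorial_succ _
    have hs1 : (s + 1)! = (s + 1) * s ! := Nat.factorial_succ _
    have h2d : (2 * s + d + 2)! = (2 * s + d + 2) * (2 * s + d + 1)! := by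
      rw [show 2 * s + d + 2 = 2 * s + d + 1 + 1 by omega]; exact Nat.factorial_succ _
    have hd1 : (d + 1)! = (d + 1) * d ! := Nat.factorial_succ _
    rw [h22, h21, hs1, h2d, hd1]
    have ne1 : ((2 * s)! : ℚ) ≠ 0 := Nat.cast_ne_zero.mpr (Nat.factorial_ne_zero _)
    have ne2 : (s ! : ℚ) ≠ 0 := Nat.cast_ne_zero.mpr (Nat.factorial_ne_zero _)
    have ne3 : ((2 * s + d + 1)! : ℚ) ≠ 0 := Nat.cast_ne_zero.mpr (Nat.factorial_ne_zero _)
    have ne4 : (d ! : ℚ) ≠ 0 := Nat.cast_ne_zero.mpr (Nat.factorial_ne_zero _)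
    push_cast
    field_simp
    ring
  · rcases Nat.lt_or_ge s (K + 1) with hs2 | hs2
    · -- s = K
      obtain rfl : s = K := by omega
      simp only [fe, ge, if_pos (show s + 1 ≤ s + 1 by omega),
        if_neg (show ¬ s + 1 ≤ s by omega),
        if_pos (show s ≤ s by omega)]
      simp only [show s + 1 + s = 2 * s + 1 by omega, show s + 1 - s - 1 = 0 by omega,
        show s + s = 2 * s by omega, show s - s = 0 by omega,
        Nat.choose_zero_right, Nat.cast_one, mul_one]
      have hnat : (2 * s + 1) * (2 * s).choose s = (s + 1) * (2 * s + 1).choose s := by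
        have h1 := Nat.add_one_mul_choose_eq (2 * s) s
        have h2 : (2 * s + 1).choose (s + 1) = (2 * s + 1).choose s := by
          rw [← Nat.choose_symm (show s + 1 ≤ 2 * s + 1 by omega),
            show 2 * s + 1 - (s + 1) = s by omega]
        rw [h2] at h1
        rw [h1]
        exact Nat.mul_comm _ _
      have hq : (2 * (s : ℚ) + 1) * ((2 * s).choose s : ℚ)
          = ((s : ℚ) + 1) * ((2 * s + 1).choose s : ℚ) := by
        exact_mod_cast congrArg (fun n : ℕ => (n : ℚ)) hnat
      have h1 : ((s : ℚ)) ≠ 0 := by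
        have : (0 : ℚ) < s := by exact_mod_cast hK
        linarith
      have h2 : ((s : ℚ) + 1) ≠ 0 := by positivity
      have h3 : (2 * (s : ℚ) + 2) ≠ 0 := by positivity
      push_cast at hq ⊢
      rw [pow_succ]
      field_simp
      linear_combination ((-1 : ℚ) ^ s) * hq
    · -- s ≥ K + 1
      simp only [fe, ge, if_neg (show ¬ s + 1 ≤ K + 1 by omega),
        if_neg (show ¬ s + 1 ≤ K by omega), if_neg (show ¬ s ≤ K by omega)]
      ring

lemma fe_sum (K : ℕ) (hK : 1 ≤ K) : ∑ s ∈ range K, fe K s = -1 / (2 * (K : ℚ)) := by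
  induction K, hK using Nat.le_induction with
  | base => norm_num [fe]
  | succ K hK ih =>
    have key : (2 * (K : ℚ) + 2) * ∑ s ∈ range (K + 1), fe (K + 1) s
        = 2 * (K : ℚ) * ∑ s ∈ range (K + 1), fe K s + (ge K (K + 1) - ge K 0) := by
      rw [Finset.mul_sum, Finset.mul_sum, ← Finset.sum_range_sub (ge K),
        ← Finset.sum_add_distrib]
      refine Finset.sum_congr rfl fun s _ => ?_
      have := cert_e K s hK
      linarith
    have hge1 : ge K (K + 1) = 0 := by
      simp only [ge, if_neg (show ¬ K + 1 ≤ K by omega)]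
    have hge0 : ge K 0 = 0 := by simp [ge]
    have hfeK : ∑ s ∈ range (K + 1), fe K s = -1 / (2 * (K : ℚ)) := by
      rw [Finset.sum_range_succ, ih,
        show fe K K = 0 by simp only [fe, if_neg (show ¬ K + 1 ≤ K by omega)], add_zero]
    rw [hge1, hge0, hfeK] at key
    have h0 : (2 * (K : ℚ)) ≠ 0 := by
      have : (0 : ℚ) < K := by exact_mod_cast hK
      positivity
    have h1 : (2 * (K : ℚ) + 2) ≠ 0 := by positivity
    push_cast
    rw [show 2 * ((K : ℚ) + 1) = 2 * (K : ℚ) + 2 by ring, eq_div_iff h1]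
    field_simp at key
    linear_combination key





lemma coeff_lhsTerm (j n k : ℕ) (hj : 1 ≤ j) (hn : 1 ≤ n) :
    PowerSeries.coeff k (lhsTerm j n)
      = if 2 * n = j * k then ((k : ℚ))⁻¹ * (-1) ^ (k * (j * k / 2)) else 0 := by
  unfold lhsTerm
  by_cases hd : j ∣ 2 * n
  · rw [if_pos hd, PowerSeries.coeff_C_mul, PowerSeries.coeff_X_pow]
    by_cases he : 2 * n = j * k
    · have hjk : 2 * n / j = k := by rw [he]; exact Nat.mul_div_cancel_left k (by omega)
      have hk1 : 1 ≤ k := by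
        rcases Nat.eq_zero_or_pos k with rfl | h
        · rw [Nat.mul_zero] at he; omega
        · exact h
      rw [hjk, if_pos rfl, if_pos he, mul_one]
      have h1 : (2 * (n : ℚ)) = (j : ℚ) * (k : ℚ) := by exact_mod_cast he
      have hexp : 2 * n * n / j = k * (j * k / 2) := by
        have h2 : 2 * n * n = j * (k * n) := by
          rw [show 2 * n * n = (2 * n) * n by ring, he]; ring
        rw [h2, Nat.mul_div_cancel_left _ (show 0 < j by omega)]
        have hn2 : n = j * k / 2 := by omega
        rw [hn2]
      rw [hexp, h1]
      have hj0 : (j : ℚ) ≠ 0 := by positivity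
      have hk0 : (k : ℚ) ≠ 0 := by
        have : (0 : ℚ) < k := by exact_mod_cast hk1
        linarith
      field_simp
    · rw [if_neg he, if_neg, mul_zero]
      intro hc
      exact he (by rw [hc]; exact (Nat.mul_div_cancel' hd).symm)
  · rw [if_neg hd, map_zero, if_neg]
    intro he
    exact hd ⟨k, he⟩

lemma lhs_tsum (j k : ℕ) (hj : 1 ≤ j) :
    ∑' m : ℕ, PowerSeries.coeff k (lhsTerm j (m + 1))
      = if 1 ≤ k ∧ 2 ∣ j * k then ((k : ℚ))⁻¹ * (-1) ^ (k * (j * k / 2)) else 0 := by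
  by_cases hc : 1 ≤ k ∧ 2 ∣ j * k
  · obtain ⟨t, ht⟩ := hc.2
    have hjk2 : 1 ≤ t := by
      rcases Nat.eq_zero_or_pos t with rfl | h
      · have := hc.1
        have hj2 : j * k ≠ 0 := by positivity
        omega
      · exact h
    rw [if_pos hc, tsum_eq_single (t - 1)]
    · rw [coeff_lhsTerm j _ k hj (by omega), if_pos (by omega)]
    · intro m hm
      rw [coeff_lhsTerm j _ k hj (by omega), if_neg]
      intro he
      exact hm (by omega)
  · rw [if_neg hc]
    have hz : ∀ m : ℕ, PowerSeries.coeff k (lhsTerm j (m + 1)) = 0 := by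
      intro m
      rw [coeff_lhsTerm j _ k hj (by omega), if_neg]
      intro he
      have hk1 : 1 ≤ k := by
        rcases Nat.eq_zero_or_pos k with rfl | h
        · rw [Nat.mul_zero] at he; omega
        · exact h
      exact hc ⟨hk1, ⟨m + 1, by omega⟩⟩
    simp only [hz, tsum_zero]

/-- The summand on the right-hand side, as a function of the power `l`. -/
noncomputable def T (j k l : ℕ) : ℚ :=
  if 1 ≤ l ∧ 2 ∣ j * l then
    ((l : ℚ))⁻¹ * (lam l : ℚ) * (-1) ^ (l * (j * l / 2 - 1)) * PowerSeries.coeff k (Y ^ l)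
  else 0

lemma T_zero_of_gt (j k l : ℕ) (hkl : k < l) : T j k l = 0 := by
  unfold T
  split_ifs with h
  · rw [coeff_Y_pow' l k h.1, if_neg (fun hc => by omega), mul_zero]
  · rfl

lemma coeff_rhsTerm (j k m : ℕ) (hj : 1 ≤ j) :
    PowerSeries.coeff k (rhsTerm j (m + 1))
      = if j ∣ 2 * (m + 1) then T j k (2 * (m + 1) / j) else 0 := by
  unfold rhsTerm
  by_cases hd : j ∣ 2 * (m + 1)
  · rw [if_pos hd, if_pos hd]
    set l := 2 * (m + 1) / j with hldef
    have hl : j * l = 2 * (m + 1) := Nat.mul_div_cancel' hd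
    have hl1 : 1 ≤ l := by
      rcases Nat.eq_zero_or_pos l with h0 | h
      · rw [h0, Nat.mul_zero] at hl; omega
      · exact h
    unfold T
    rw [if_pos ⟨hl1, ⟨m + 1, hl⟩⟩]
    rw [PowerSeries.coeff_C_mul]
    have hY : (X * (1 - X ^ 2)⁻¹ : ℚ⟦X⟧) = Y := rfl
    rw [hY]
    have hexp : 2 * (m + 1) * (m + 1 - 1) / j = l * (j * l / 2 - 1) := by
      have h2 : 2 * (m + 1) * (m + 1 - 1) = j * (l * m) := by
        rw [show m + 1 - 1 = m by omega, ← hl]; ring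
      rw [h2, Nat.mul_div_cancel_left _ (show 0 < j by omega)]
      have hm2 : m = j * l / 2 - 1 := by omega
      rw [hm2]
    rw [hexp]
    have hj0 : (j : ℚ) ≠ 0 := by positivity
    have hl0 : (l : ℚ) ≠ 0 := by
      have : (0 : ℚ) < l := by exact_mod_cast hl1
      linarith
    have hval : (j : ℚ) / (2 * (((m + 1 : ℕ)) : ℚ)) = ((l : ℚ))⁻¹ := by
      have h1 : (2 * (((m + 1 : ℕ)) : ℚ)) = (j : ℚ) * (l : ℚ) := by exact_mod_cast hl.symm
      rw [h1]
      field_simp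
    rw [hval]
  · rw [if_neg hd, if_neg hd, map_zero]

lemma rhs_tsum (j k : ℕ) (hj : 1 ≤ j) :
    ∑' m : ℕ, PowerSeries.coeff k (rhsTerm j (m + 1))
      = ∑ l ∈ range (k + 1), T j k l := by
  have hout : ∀ m : ℕ, m ∉ range (j * k) → PowerSeries.coeff k (rhsTerm j (m + 1)) = 0 := by
    intro m hm
    rw [coeff_rhsTerm j k m hj]
    split_ifs with hd
    · have hl := Nat.mul_div_cancel' hd
      refine T_zero_of_gt _ _ _ ?_
      have hmk : j * k ≤ m := by simpa [Finset.mem_range, not_lt] using hm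
      by_contra hlek
      push_neg at hlek
      have : j * (2 * (m + 1) / j) ≤ j * k := Nat.mul_le_mul_left j hlek
      omega
    · rfl
  rw [tsum_eq_sum hout]
  have hstep : ∀ m ∈ range (j * k), PowerSeries.coeff k (rhsTerm j (m + 1))
      = if j ∣ 2 * (m + 1) ∧ 2 * (m + 1) ≤ j * k then T j k (2 * (m + 1) / j) else 0 := by
    intro m hm
    rw [coeff_rhsTerm j k m hj]
    split_ifs with h1 h2 h3
    · rfl
    · -- j ∣ 2(m+1) but 2(m+1) > jk : T = 0 since l > k
      push_neg at h2
      refine T_zero_of_gt _ _ _ ?_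
      have hl := Nat.mul_div_cancel' h1
      by_contra hlek
      push_neg at hlek
      have : j * (2 * (m + 1) / j) ≤ j * k := Nat.mul_le_mul_left j hlek
      omega
    · exact absurd h3.1 h1
    · rfl
  rw [Finset.sum_congr rfl hstep, ← Finset.sum_filter]
  have hT0 : ∀ l ∈ range (k + 1), ¬ (1 ≤ l ∧ 2 ∣ j * l) → T j k l = 0 := by
    intro l _ h
    unfold T
    rw [if_neg h]
  rw [show (∑ l ∈ range (k + 1), T j k l)
      = ∑ l ∈ (range (k + 1)).filter (fun l => 1 ≤ l ∧ 2 ∣ j * l), T j k l from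
    (Finset.sum_filter_of_ne (fun l hl hne => by
      by_contra hq
      exact hne (hT0 l hl hq))).symm]
  refine Finset.sum_nbij' (fun m => 2 * (m + 1) / j) (fun l => j * l / 2 - 1) ?_ ?_ ?_ ?_ ?_
  · intro m hm
    simp only [Finset.mem_filter, Finset.mem_range] at hm ⊢
    obtain ⟨hmr, hd, hle⟩ := hm
    have hl := Nat.mul_div_cancel' hd
    constructor
    · have : j * (2 * (m + 1) / j) ≤ j * k := by omega
      have := Nat.le_of_mul_le_mul_left this (show 0 < j by omega)
      omega
    · exact ⟨by
        rcases Nat.eq_zero_or_pos (2 * (m + 1) / j) with h0 | h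
        · rw [h0, Nat.mul_zero] at hl; omega
        · exact h, ⟨m + 1, by omega⟩⟩

  · intro l hl
    simp only [Finset.mem_filter, Finset.mem_range] at hl ⊢
    obtain ⟨hlr, hl1, hd⟩ := hl
    obtain ⟨t, ht⟩ := hd
    have hjl : 1 ≤ j * l := Nat.mul_pos (by omega) (by omega)
    have hjlk : j * l ≤ j * k := Nat.mul_le_mul_left j (by omega)
    refine ⟨by omega, ⟨l, by omega⟩, by omega⟩
  · intro m hm
    simp only [Finset.mem_filter, Finset.mem_range] at hm
    obtain ⟨hmr, hd, hle⟩ := hm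
    have hl := Nat.mul_div_cancel' hd
    show j * (2 * (m + 1) / j) / 2 - 1 = m
    omega
  · intro l hl
    simp only [Finset.mem_filter, Finset.mem_range] at hl
    obtain ⟨hlr, hl1, hd⟩ := hl
    obtain ⟨t, ht⟩ := hd
    have hjl : 1 ≤ j * l := Nat.mul_pos (by omega) (by omega)
    have h5 : j * l / 2 - 1 + 1 = t := by omega
    show 2 * (j * l / 2 - 1 + 1) / j = l
    rw [h5, show 2 * t = j * l by omega, Nat.mul_div_cancel_left l (by omega : 0 < j)]
  · intro m hm
    rfl


lemma lam_even (s : ℕ) : lam (2 * s + 2) = (-1) ^ (s + 1) * ((2 * s + 1).choose s) := by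
  unfold lam
  rw [show 2 * s + 2 - 1 = 2 * s + 1 by omega,
    show (2 * s + 2) * (2 * s + 1) / 2 = (2 * s + 1) * (s + 1) by
      rw [show (2 * s + 2) * (2 * s + 1) = (2 * s + 1) * (s + 1) * 2 by ring]
      exact Nat.mul_div_cancel _ two_pos,
    show (2 * s + 1) / 2 = s by omega, pow_mul, Odd.neg_one_pow ⟨s, by ring⟩]

lemma lam_odd (r : ℕ) : lam (2 * r + 1) = (-1) ^ r * ((2 * r).choose r) := by
  unfold lam
  rw [show 2 * r + 1 - 1 = 2 * r by omega,
    show (2 * r + 1) * (2 * r) / 2 = (2 * r + 1) * r by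
      rw [show (2 * r + 1) * (2 * r) = (2 * r + 1) * r * 2 by ring]
      exact Nat.mul_div_cancel _ two_pos,
    show 2 * r / 2 = r by omega, pow_mul, Odd.neg_one_pow ⟨r, by ring⟩]

lemma sum_even_support (F : ℕ → ℚ) (h0 : F 0 = 0) (hodd : ∀ r, F (2 * r + 1) = 0) (K : ℕ) :
    ∑ l ∈ range (2 * K + 1), F l = ∑ s ∈ range K, F (2 * s + 2) := by
  induction K with
  | zero => simpa using h0
  | succ K ih =>
    rw [show 2 * (K + 1) + 1 = (2 * K + 1) + 1 + 1 by omega, Finset.sum_range_succ,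
      Finset.sum_range_succ, ih, Finset.sum_range_succ, hodd K,
      show 2 * K + 1 + 1 = 2 * K + 2 by omega]
    ring

lemma sum_odd_support (F : ℕ → ℚ) (heven : ∀ r, F (2 * r) = 0) (K : ℕ) :
    ∑ l ∈ range (2 * K + 2), F l = ∑ r ∈ range (K + 1), F (2 * r + 1) := by
  induction K with
  | zero =>
    have h0 : F 0 = 0 := by simpa using heven 0
    norm_num [Finset.sum_range_succ, h0]
  | succ K ih =>
    rw [show 2 * (K + 1) + 2 = (2 * K + 2) + 1 + 1 by omega, Finset.sum_range_succ,
      Finset.sum_range_succ, ih]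
    rw [Finset.sum_range_succ (fun r => F (2 * r + 1)) (K + 1)]
    rw [show 2 * K + 2 = 2 * (K + 1) by omega, heven (K + 1), add_zero]
    congr 2

lemma T_oddpow_zero (j K r : ℕ) : T j (2 * K) (2 * r + 1) = 0 := by
  unfold T
  split_ifs with h
  · rw [coeff_Y_pow' _ _ (by omega), if_neg (by omega), mul_zero]
  · rfl

lemma T_evenpow_zero (j K r : ℕ) : T j (2 * K + 1) (2 * r) = 0 := by
  unfold T
  split_ifs with h
  · rw [coeff_Y_pow' _ _ h.1, if_neg (by omega), mul_zero]
  · rfl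

lemma T_zero' (j k : ℕ) : T j k 0 = 0 := by
  unfold T
  rw [if_neg (by omega)]

lemma T_even_eval (j K s : ℕ) (hj : 1 ≤ j) (hsK : s + 1 ≤ K) :
    T j (2 * K) (2 * s + 2) = fe K s := by
  unfold T fe
  rw [if_pos ⟨by omega, ⟨j * (s + 1), by ring⟩⟩, if_pos hsK]
  rw [coeff_Y_pow' _ _ (by omega), if_pos ⟨by omega, by omega⟩]
  rw [show 2 * K - (2 * s + 2) = 2 * (K - s - 1) by omega,
    Nat.mul_div_cancel_left _ two_pos,
    show 2 * s + 2 - 1 + (K - s - 1) = K + s by omega]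
  rw [lam_even s]
  have hsgn : (-1 : ℚ) ^ ((2 * s + 2) * (j * (2 * s + 2) / 2 - 1)) = 1 :=
    Even.neg_one_pow ⟨(s + 1) * (j * (2 * s + 2) / 2 - 1), by ring⟩
  rw [hsgn]
  push_cast
  have h0 : (2 * (s : ℚ) + 2) ≠ 0 := by positivity
  field_simp

lemma T_odd_eval (j K r u : ℕ) (hu : j = 2 * u) (hu1 : 1 ≤ u) (hrK : r ≤ K) :
    T j (2 * K + 1) (2 * r + 1) = (-1) ^ u * fo K r := by
  unfold T fo
  rw [if_pos ⟨by omega, ⟨u * (2 * r + 1), by rw [hu]; ring⟩⟩, if_pos hrK]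
  rw [coeff_Y_pow' _ _ (by omega), if_pos ⟨by omega, by omega⟩]
  rw [show 2 * K + 1 - (2 * r + 1) = 2 * (K - r) by omega,
    Nat.mul_div_cancel_left _ two_pos,
    show 2 * r + 1 - 1 + (K - r) = K + r by omega]
  rw [lam_odd r]
  have hdiv : j * (2 * r + 1) / 2 = u * (2 * r + 1) := by
    rw [hu, show 2 * u * (2 * r + 1) = u * (2 * r + 1) * 2 by ring]
    exact Nat.mul_div_cancel _ two_pos
  rw [hdiv]
  have hsgn : (-1 : ℚ) ^ ((2 * r + 1) * (u * (2 * r + 1) - 1)) = (-1 : ℚ) ^ (u + 1) := by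
    rcases Nat.even_or_odd u with ⟨v, hv⟩ | ⟨v, hv⟩
    · have hv1 : 1 ≤ v := by omega
      have h2 : 1 ≤ v * (2 * r + 1) := Nat.mul_pos (by omega) (by omega)
      have hE : Odd ((2 * r + 1) * (u * (2 * r + 1) - 1)) := by
        refine Odd.mul ⟨r, by ring⟩ ?_
        have h1 : u * (2 * r + 1) = 2 * (v * (2 * r + 1)) := by rw [hv]; ring
        exact ⟨v * (2 * r + 1) - 1, by omega⟩
      rw [Odd.neg_one_pow hE, Odd.neg_one_pow (show Odd (u + 1) from ⟨v, by omega⟩)]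
    · have ho : Odd (u * (2 * r + 1)) := Odd.mul ⟨v, by omega⟩ ⟨r, by ring⟩
      obtain ⟨w, hw⟩ := ho
      have hE : Even ((2 * r + 1) * (u * (2 * r + 1) - 1)) :=
        Even.mul_left ⟨w, by omega⟩ _
      rw [Even.neg_one_pow hE, Even.neg_one_pow (show Even (u + 1) from ⟨v + 1, by omega⟩)]
  rw [hsgn]
  have h0 : (2 * (r : ℚ) + 1) ≠ 0 := by positivity
  push_cast
  field_simp
  ring

end SeriesIdentityAux

open PowerSeries in
/-- For every integer `j ≥ 1`, the identity
`−∑_{n ≥ 1, j ∣ 2n} (j/(2n)) (−1)^(2n·n/j) x^(2n/j)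
  = ∑_{n ≥ 1, j ∣ 2n} (j/(2n)) λ(2n/j) (−1)^(2n(n−1)/j) (x(1−x²)⁻¹)^(2n/j)`
holds in `ℚ[[x]]`, both sides being defined coefficientwise. -/
theorem series_identity (j : ℕ) (hj : 1 ≤ j) :
    (PowerSeries.mk fun k => -(∑' m : ℕ, coeff k (lhsTerm j (m + 1)))) =
      PowerSeries.mk fun k => ∑' m : ℕ, coeff k (rhsTerm j (m + 1)) := by

  open SeriesIdentityAux Finset in
  ext k
  rw [PowerSeries.coeff_mk, PowerSeries.coeff_mk, lhs_tsum j k hj, rhs_tsum j k hj]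
  by_cases hk : 1 ≤ k ∧ 2 ∣ j * k
  · rw [if_pos hk]
    rcases Nat.even_or_odd k with ⟨K, hK⟩ | ⟨K, hK⟩
    · -- k even
      obtain rfl : k = 2 * K := by omega
      have hK1 : 1 ≤ K := by omega
      have hsgn : (-1 : ℚ) ^ (2 * K * (j * (2 * K) / 2)) = 1 :=
        Even.neg_one_pow ⟨K * (j * (2 * K) / 2), by ring⟩
      rw [hsgn]
      rw [sum_even_support (T j (2 * K)) (T_zero' j (2 * K)) (T_oddpow_zero j K) K]
      rw [Finset.sum_congr rfl
        (fun s hs => T_even_eval j K s hj (by simpa [Finset.mem_range] using hs))]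
      rw [fe_sum K hK1]
      have h0 : (2 * (K : ℚ)) ≠ 0 := by
        have : (0 : ℚ) < K := by exact_mod_cast hK1
        positivity
      push_cast
      field_simp
    · -- k odd
      obtain rfl : k = 2 * K + 1 := by omega
      have hje : 2 ∣ j := by
        rcases (Nat.Prime.dvd_mul Nat.prime_two).mp hk.2 with h | h
        · exact h
        · exfalso; omega
      obtain ⟨u, hu⟩ := hje
      have hu1 : 1 ≤ u := by omega
      rw [show 2 * K + 1 + 1 = 2 * K + 2 by omega]
      rw [sum_odd_support (T j (2 * K + 1)) (T_evenpow_zero j K) K]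
      rw [Finset.sum_congr rfl
        (fun r hr => T_odd_eval j K r u hu hu1 (by simpa [Finset.mem_range, Nat.lt_succ_iff] using hr))]
      rw [← Finset.mul_sum, fo_sum K]
      have hdiv : j * (2 * K + 1) / 2 = u * (2 * K + 1) := by
        rw [hu, show 2 * u * (2 * K + 1) = u * (2 * K + 1) * 2 by ring]
        exact Nat.mul_div_cancel _ two_pos
      rw [hdiv]
      have hsgn : (-1 : ℚ) ^ ((2 * K + 1) * (u * (2 * K + 1))) = (-1 : ℚ) ^ u := by
        rcases Nat.even_or_odd u with ⟨v, hv⟩ | ⟨v, hv⟩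
        · rw [Even.neg_one_pow (Even.mul_left ⟨v * (2 * K + 1), by rw [hv]; ring⟩ _),
            Even.neg_one_pow ⟨v, hv⟩]
        · rw [Odd.neg_one_pow (Odd.mul ⟨K, by ring⟩ (Odd.mul ⟨v, by omega⟩ ⟨K, by ring⟩)),
            Odd.neg_one_pow ⟨v, by omega⟩]
      rw [hsgn]
      have h0 : (2 * (K : ℚ) + 1) ≠ 0 := by positivity
      push_cast
      field_simp
  · rw [if_neg hk, neg_zero]
    symm
    apply Finset.sum_eq_zero
    intro l _
    unfold SeriesIdentityAux.T
    split_ifs with hg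
    · rw [coeff_Y_pow' l k hg.1, if_neg, mul_zero]
      rintro ⟨h1, h2⟩
      refine hk ⟨by omega, ?_⟩
      have h3 : 2 ∣ j * (k - l) := Dvd.dvd.mul_left h2 j
      have h4 : 2 ∣ j * l + j * (k - l) := dvd_add hg.2 h3
      rwa [← Nat.mul_add, Nat.add_sub_cancel' h1] at h4
    · rfl
end

section
/- In the ring ℚ[[x]] of formal power series, ∑_{n ≥ 1} (−1)^{n−1} · c_{n−1} · (x·(1−x²)^{−1})^{2n−1} = x, where c_k = binomial(2k,k)/(k+1) is the k-th Catalan number. Equivalently, the formal power series f(t) = ∑_{n ≥ 1} (−1)^{n−1} c_{n−1} t^{2n−1} and g(t) = t·(1−t²)^{−1} are compositional inverses of one another. -/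
open PowerSeries Finset

open PowerSeries in
/-- The summand indexed by `n ≥ 1`: `(−1)^(n−1) · c_{n−1} · (x·(1−x²)⁻¹)^(2n−1)`,
where `c_k` is the `k`-th Catalan number. -/
noncomputable def catalanTerm (n : ℕ) : PowerSeries ℚ :=
  C ((-1) ^ (n - 1) * (catalan (n - 1) : ℚ)) * (X * (1 - X ^ 2)⁻¹) ^ (2 * n - 1)

noncomputable def catU : PowerSeries ℚ := X * (1 - X ^ 2)⁻¹

def catA (m : ℕ) : ℚ := (-1) ^ m * catalan m

noncomputable def catT (m : ℕ) : PowerSeries ℚ := C (catA m) * catU ^ (2 * m + 1)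

noncomputable def catS (N : ℕ) : PowerSeries ℚ := ∑ m ∈ range N, catT m

lemma cat_hA : (1 - X ^ 2 : PowerSeries ℚ) * (1 - X ^ 2)⁻¹ = 1 := by
  apply PowerSeries.mul_inv_cancel
  simp

lemma cat_X_eq : (X : PowerSeries ℚ) + catU * X ^ 2 = catU := by
  have : catU * (1 - X ^ 2) = X := by
    rw [catU, mul_assoc, PowerSeries.inv_mul_cancel _ (by simp), mul_one]
  linear_combination -this

lemma cat_rec (m : ℕ) : ∑ pq ∈ antidiagonal m, catA pq.1 * catA pq.2 = -catA (m + 1) := by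
  have h : ∀ pq ∈ antidiagonal m, catA pq.1 * catA pq.2 = (-1 : ℚ) ^ m * (catalan pq.1 * catalan pq.2 : ℕ) := by
    rintro ⟨p, q⟩ hpq
    rw [Finset.HasAntidiagonal.mem_antidiagonal] at hpq
    simp only [catA]
    push_cast
    rw [← hpq]
    ring
  rw [Finset.sum_congr rfl h, ← Finset.mul_sum, ← Nat.cast_sum, ← catalan_succ']
  simp [catA]
  ring

lemma cat_XN_dvd_U_pow {N e : ℕ} (h : N ≤ e) : (X : PowerSeries ℚ) ^ N ∣ catU ^ e := by
  rw [catU, mul_pow]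
  exact Dvd.dvd.mul_right (pow_dvd_pow _ h) _

lemma cat_key (N : ℕ) : (X : PowerSeries ℚ) ^ N ∣ catS N + catU * (catS N) ^ 2 - catU := by
  rcases N with _ | M
  · simp
  set N := M + 1
  have hsq : catU * (catS N) ^ 2 =
      ∑ pq ∈ range N ×ˢ range N, C (catA pq.1 * catA pq.2) * catU ^ (2 * (pq.1 + pq.2) + 3) := by
    rw [catS, sq, Finset.sum_mul_sum, Finset.mul_sum]
    simp_rw [Finset.mul_sum]
    rw [← Finset.sum_product']
    apply Finset.sum_congr rfl
    rintro ⟨p, q⟩ _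
    simp only [catT, map_mul]
    rw [show 2 * (p + q) + 3 = (2 * p + 1) + (2 * q + 1) + 1 by ring, pow_add, pow_add, pow_one]
    ring
  rw [hsq, ← Finset.sum_filter_add_sum_filter_not (range N ×ˢ range N) (fun pq => pq.1 + pq.2 < M)]
  have hset : (range N ×ˢ range N).filter (fun pq => pq.1 + pq.2 < M) =
      (range M).biUnion antidiagonal := by
    ext ⟨p, q⟩
    simp only [Finset.mem_filter, Finset.mem_product, Finset.mem_range, Finset.mem_biUnion,
      Finset.HasAntidiagonal.mem_antidiagonal]
    constructor
    · rintro ⟨⟨_, _⟩, h⟩; exact ⟨p + q, h, rfl⟩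
    · rintro ⟨m, hm, hpq⟩; omega
  have hdisj : (↑(range M) : Set ℕ).PairwiseDisjoint antidiagonal := by
    intro i _ j _ hij
    simp only [Finset.disjoint_left]
    rintro ⟨p, q⟩ hp hq
    rw [Finset.HasAntidiagonal.mem_antidiagonal] at hp hq
    exact hij (hp ▸ hq.symm ▸ rfl)
  have hfirst : ∑ pq ∈ (range N ×ˢ range N).filter (fun pq => pq.1 + pq.2 < M),
      C (catA pq.1 * catA pq.2) * catU ^ (2 * (pq.1 + pq.2) + 3) = catU - catS N := by
    rw [hset, Finset.sum_biUnion hdisj]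
    have hinner : ∀ m ∈ range M, ∑ pq ∈ antidiagonal m,
        C (catA pq.1 * catA pq.2) * catU ^ (2 * (pq.1 + pq.2) + 3) = -catT (m + 1) := by
      intro m _
      have : ∀ pq ∈ antidiagonal m, C (catA pq.1 * catA pq.2) * catU ^ (2 * (pq.1 + pq.2) + 3)
          = C (catA pq.1 * catA pq.2) * catU ^ (2 * m + 3) := by
        rintro ⟨p, q⟩ hpq
        rw [Finset.HasAntidiagonal.mem_antidiagonal] at hpq
        rw [hpq]
      rw [Finset.sum_congr rfl this, ← Finset.sum_mul, ← map_sum, cat_rec, map_neg, catT]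
      rw [show 2 * (m + 1) + 1 = 2 * m + 3 by ring]
      ring
    rw [Finset.sum_congr rfl hinner, Finset.sum_neg_distrib]
    have : catS N = catT 0 + ∑ m ∈ range M, catT (m + 1) := by
      rw [catS, Finset.sum_range_succ']
      ring
    rw [this]
    have ht0 : catT 0 = catU := by simp [catT, catA]
    rw [ht0]; ring
  rw [hfirst]
  have : catS N + (catU - catS N + ∑ pq ∈ (range N ×ˢ range N).filter (fun pq => ¬pq.1 + pq.2 < M),
      C (catA pq.1 * catA pq.2) * catU ^ (2 * (pq.1 + pq.2) + 3)) - catU =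
      ∑ pq ∈ (range N ×ˢ range N).filter (fun pq => ¬pq.1 + pq.2 < M),
      C (catA pq.1 * catA pq.2) * catU ^ (2 * (pq.1 + pq.2) + 3) := by ring
  rw [this]
  apply Finset.dvd_sum
  rintro ⟨p, q⟩ hpq
  simp only [Finset.mem_filter, not_lt] at hpq
  exact Dvd.dvd.mul_left (cat_XN_dvd_U_pow (by omega)) _

lemma cat_dvd_sub (N : ℕ) : (X : PowerSeries ℚ) ^ N ∣ catS N - X := by
  have hunit : IsUnit (1 + catU * (catS N + X)) := by
    rw [PowerSeries.isUnit_iff_constantCoeff]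
    have hu : constantCoeff catU = 0 := by
      simp [catU]
    simp [hu]
  obtain ⟨v, hv⟩ := hunit
  have hkey := cat_key N
  have heq : (catS N - X) * (1 + catU * (catS N + X)) = catS N + catU * (catS N) ^ 2 - catU := by
    have hx := cat_X_eq
    linear_combination -hx
  obtain ⟨W, hW⟩ := hkey
  have h2 : (catS N - X) * (v : PowerSeries ℚ) = X ^ N * W := by rw [hv, heq, hW]
  refine ⟨W * ((v⁻¹ : (PowerSeries ℚ)ˣ) : PowerSeries ℚ), ?_⟩
  calc catS N - X = (catS N - X) * ((v : PowerSeries ℚ) * ((v⁻¹ : (PowerSeries ℚ)ˣ) : PowerSeries ℚ)) := by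
        rw [Units.mul_inv, mul_one]
    _ = X ^ N * W * ((v⁻¹ : (PowerSeries ℚ)ˣ) : PowerSeries ℚ) := by rw [← mul_assoc, h2]
    _ = X ^ N * (W * ((v⁻¹ : (PowerSeries ℚ)ˣ) : PowerSeries ℚ)) := by rw [mul_assoc]

lemma cat_term_eq (m : ℕ) : catalanTerm (m + 1) = catT m := by
  have h2 : 2 * (m + 1) - 1 = 2 * m + 1 := by omega
  simp only [catalanTerm, catT, catA, catU, Nat.add_sub_cancel, h2]

open PowerSeries in
/-- In `ℚ[[x]]`, `∑_{n ≥ 1} (−1)^(n−1) c_{n−1} (x·(1−x²)⁻¹)^(2n−1) = x`,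
the sum being defined coefficientwise; i.e. `∑_{n≥1} (−1)^(n−1) c_{n−1} t^(2n−1)`
and `t·(1−t²)⁻¹` are compositional inverses of one another. -/
theorem catalan_series_compositional_inverse :
    (PowerSeries.mk fun k => ∑' m : ℕ, coeff k (catalanTerm (m + 1))) =
      (X : PowerSeries ℚ) := by
  ext k
  rw [coeff_mk]
  have hzero : ∀ m ∉ range (k + 1), coeff k (catalanTerm (m + 1)) = 0 := by
    intro m hm
    rw [Finset.mem_range, not_lt] at hm
    rw [cat_term_eq]
    have hdvd : (X : PowerSeries ℚ) ^ (2 * m + 1) ∣ catT m :=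
      Dvd.dvd.mul_left (cat_XN_dvd_U_pow le_rfl) _
    rw [PowerSeries.X_pow_dvd_iff] at hdvd
    exact hdvd k (by omega)
  rw [tsum_eq_sum hzero]
  have : ∑ m ∈ range (k + 1), coeff k (catalanTerm (m + 1)) = coeff k (catS (k + 1)) := by
    rw [catS, map_sum]
    exact Finset.sum_congr rfl (fun m _ => by rw [cat_term_eq])
  rw [this]
  have hdvd := cat_dvd_sub (k + 1)
  rw [PowerSeries.X_pow_dvd_iff] at hdvd
  have := hdvd k (by omega)
  rw [map_sub] at this
  linarith [this]
end
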